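/- arXiv:1809.09178 — 5 statements merged into one kernel-verified Lean document; each statement's English description precedes it below -/
import Mathlib

section
/- Let Ω ⊆ ℝ³ be a connected open set and let y₁, y₂ : Ω → ℝ³ be twice continuously differentiable maps whose Jacobian matrices Dy₁(x), Dy₂(x) have positive determinant at every x ∈ Ω, and whose right Cauchy–Green fields coincide: (Dy₁(x))ᵀ Dy₁(x) = (Dy₂(x))ᵀ Dy₂(x) for all x ∈ Ω. Then y₁ and y₂ are rigidly related: there exist a constant proper orthogonal 3×3 matrix R (Rᵀ R = I, det R = 1) and a constant vector t ∈ ℝ³ such that y₁(x) = R y₂(x) + t for all x ∈ Ω. -/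
noncomputable section

open Matrix

/-- Points of 3-d Euclidean space, as triples of reals. -/
abbrev E3 : Type := Fin 3 → ℝ

/-- Partial derivative `∂_j f` of a scalar field `f` at `x`. -/
noncomputable def pd (j : Fin 3) (f : E3 → ℝ) (x : E3) : ℝ :=
  fderiv ℝ f x (Pi.single j 1)

/-- The Jacobian matrix `Dy(x)` of a map `y : ℝ³ → ℝ³`, with entries `(Dy)_{iα} = ∂_α y^i`. -/
noncomputable def jac (y : E3 → E3) (x : E3) : Matrix (Fin 3) (Fin 3) ℝ :=
  Matrix.of fun i α => pd α (fun z => y z i) x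

attribute [local instance] Matrix.linftyOpNormedRing Matrix.linftyOpNormedAlgebra

namespace WeingartenAux

abbrev M3 : Type := Matrix (Fin 3) (Fin 3) ℝ

/-- Every vector is a combination of the standard basis vectors. -/
lemma e3_eq_sum (v : E3) : v = ∑ k, v k • (Pi.single k 1 : E3) := by
  conv_lhs => rw [← Finset.univ_sum_single v]
  refine Finset.sum_congr rfl fun k _ => ?_
  ext j
  simp [Pi.single_apply]

/-- A continuous linear map on `E3` is determined by its values on the basis. -/
lemma clm_apply_eq {V : Type*} [NormedAddCommGroup V] [NormedSpace ℝ V]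
    (L : E3 →L[ℝ] V) (v : E3) : L v = ∑ k, v k • L (Pi.single k 1) := by
  conv_lhs => rw [e3_eq_sum v]
  rw [map_sum]
  simp

/-- Two continuous linear maps agreeing on the basis agree. -/
lemma clm_ext_basis {V : Type*} [NormedAddCommGroup V] [NormedSpace ℝ V]
    {L L' : E3 →L[ℝ] V} (h : ∀ k, L (Pi.single k 1) = L' (Pi.single k 1)) : L = L' :=
  ContinuousLinearMap.ext fun v => by rw [clm_apply_eq, clm_apply_eq]; simp [h]

/-- A function with vanishing derivative on a preconnected open set is constant there. -/
lemma const_of_hasFDerivAt_zero {V : Type*} [NormedAddCommGroup V] [NormedSpace ℝ V]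
    {Ω : Set E3} (hΩ : IsOpen Ω) (hconn : IsPreconnected Ω) {h : E3 → V}
    (hd : ∀ x ∈ Ω, HasFDerivAt h (0 : E3 →L[ℝ] V) x) {a b : E3} (ha : a ∈ Ω) (hb : b ∈ Ω) :
    h a = h b := by
  have loc : ∀ x ∈ Ω, ∃ ε > 0, Metric.ball x ε ⊆ Ω ∧ ∀ z ∈ Metric.ball x ε, h z = h x := by
    intro x hx
    obtain ⟨ε, hε, hball⟩ := Metric.isOpen_iff.mp hΩ x hx
    refine ⟨ε, hε, hball, fun z hz => ?_⟩
    refine (convex_ball x ε).is_const_of_fderivWithin_eq_zero (f := h)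
      (fun w hw => ((hd w (hball hw)).differentiableAt).differentiableWithinAt)
      (fun w hw => ?_) hz (Metric.mem_ball_self hε)
    rw [fderivWithin_of_isOpen Metric.isOpen_ball hw]
    exact (hd w (hball hw)).fderiv
  by_contra hne
  set u : Set E3 := {x | x ∈ Ω ∧ h x = h b} with hu_def
  set v : Set E3 := {x | x ∈ Ω ∧ h x ≠ h b} with hv_def
  have hu : IsOpen u := by
    rw [Metric.isOpen_iff]
    rintro x ⟨hxΩ, hxe⟩
    obtain ⟨ε, hε, hsub, hconst⟩ := loc x hxΩ
    exact ⟨ε, hε, fun z hz => ⟨hsub hz, (hconst z hz).trans hxe⟩⟩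
  have hv : IsOpen v := by
    rw [Metric.isOpen_iff]
    rintro x ⟨hxΩ, hxe⟩
    obtain ⟨ε, hε, hsub, hconst⟩ := loc x hxΩ
    exact ⟨ε, hε, fun z hz => ⟨hsub hz, (hconst z hz).symm ▸ hxe⟩⟩
  obtain ⟨c, _, hcu, hcv⟩ := hconn u v hu hv
    (fun z hz => by by_cases hc : h z = h b
                    · exact Or.inl ⟨hz, hc⟩
                    · exact Or.inr ⟨hz, hc⟩)
    ⟨b, hb, hb, rfl⟩ ⟨a, ha, ha, hne⟩
  exact hcv.2 hcu.2

/-- The linear map sending a continuous linear map on `E3` to its matrix. -/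
def Tclm : (E3 →L[ℝ] E3) →L[ℝ] M3 :=
  LinearMap.toContinuousLinearMap
  { toFun := fun L => Matrix.of fun i α => L (Pi.single α 1) i
    map_add' := by intro L L'; ext i α; simp
    map_smul' := by intro c L; ext i α; simp }

@[simp] lemma Tclm_apply (L : E3 →L[ℝ] E3) (i α : Fin 3) :
    Tclm L i α = L (Pi.single α 1) i := rfl

/-- The entry evaluation, as a continuous linear map. -/
def entryCLM (i α : Fin 3) : M3 →L[ℝ] ℝ :=
  LinearMap.toContinuousLinearMap
  { toFun := fun A => A i α
    map_add' := fun _ _ => rfl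
    map_smul' := fun _ _ => rfl }

@[simp] lemma entryCLM_apply (i α : Fin 3) (A : M3) : entryCLM i α A = A i α := rfl

/-- The derivative of the Jacobian field. -/
def DJ (y : E3 → E3) (x : E3) : E3 →L[ℝ] M3 :=
  Tclm.comp (fderiv ℝ (fderiv ℝ y) x)

/-- Entrywise partial derivatives of the Jacobian field. -/
def pj (k : Fin 3) (y : E3 → E3) (x : E3) : M3 :=
  Matrix.of fun i α => pd k (fun z => jac y z i α) x

variable {Ω : Set E3} {y : E3 → E3} {x : E3}

lemma jac_eq_of_diff (hd : DifferentiableAt ℝ y x) : jac y x = Tclm (fderiv ℝ y x) := by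
  ext i α
  show pd α (fun z => y z i) x = fderiv ℝ y x (Pi.single α 1) i
  have : fderiv ℝ (fun z => y z i) x
      = (ContinuousLinearMap.proj (R := ℝ) (φ := fun _ : Fin 3 => ℝ) i).comp (fderiv ℝ y x) :=
    ((ContinuousLinearMap.proj (R := ℝ) (φ := fun _ : Fin 3 => ℝ) i).hasFDerivAt.comp x
      hd.hasFDerivAt).fderiv
  rw [pd, this]
  rfl

lemma diffAt_of_mem (hΩ : IsOpen Ω) (hy : ContDiffOn ℝ 2 y Ω) (hx : x ∈ Ω) :
    DifferentiableAt ℝ y x := by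
  have := (hy x hx).contDiffAt (hΩ.mem_nhds hx)
  exact this.differentiableAt two_ne_zero

lemma fderiv_diffAt (hΩ : IsOpen Ω) (hy : ContDiffOn ℝ 2 y Ω) (hx : x ∈ Ω) :
    DifferentiableAt ℝ (fderiv ℝ y) x := by
  have h1 : ContDiffOn ℝ 1 (fderiv ℝ y) Ω := hy.fderiv_of_isOpen hΩ le_rfl
  have := (h1 x hx).contDiffAt (hΩ.mem_nhds hx)
  exact this.differentiableAt one_ne_zero

lemma hasFDerivAt_jac (hΩ : IsOpen Ω) (hy : ContDiffOn ℝ 2 y Ω) (hx : x ∈ Ω) :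
    HasFDerivAt (fun z => jac y z) (DJ y x) x := by
  have hD : HasFDerivAt (fun z => Tclm (fderiv ℝ y z)) (DJ y x) x :=
    Tclm.hasFDerivAt.comp x (fderiv_diffAt hΩ hy hx).hasFDerivAt
  refine hD.congr_of_eventuallyEq ?_
  filter_upwards [hΩ.mem_nhds hx] with z hz
  exact jac_eq_of_diff (diffAt_of_mem hΩ hy hz)

lemma DJ_single (hΩ : IsOpen Ω) (hy : ContDiffOn ℝ 2 y Ω) (hx : x ∈ Ω) (k : Fin 3) :
    DJ y x (Pi.single k 1) = pj k y x := by
  ext i α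
  have hE : HasFDerivAt (fun z => jac y z i α) ((entryCLM i α).comp (DJ y x)) x :=
    (entryCLM i α).hasFDerivAt.comp x (hasFDerivAt_jac hΩ hy hx)
  show DJ y x (Pi.single k 1) i α = pd k (fun z => jac y z i α) x
  rw [pd, hE.fderiv]
  rfl

lemma pj_symm (hΩ : IsOpen Ω) (hy : ContDiffOn ℝ 2 y Ω) (hx : x ∈ Ω) (k i α : Fin 3) :
    pj k y x i α = pj α y x i k := by
  have h1 : ∀ m : Fin 3, pj m y x = DJ y x (Pi.single m 1) :=
    fun m => (DJ_single hΩ hy hx m).symm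
  rw [h1, h1]
  show fderiv ℝ (fderiv ℝ y) x (Pi.single k 1) (Pi.single α 1) i
      = fderiv ℝ (fderiv ℝ y) x (Pi.single α 1) (Pi.single k 1) i
  have hsymm := second_derivative_symmetric_of_eventually
    (f := y) (f' := fderiv ℝ y) (f'' := fderiv ℝ (fderiv ℝ y) x) (x := x)
    ?_ (fderiv_diffAt hΩ hy hx).hasFDerivAt (Pi.single k 1) (Pi.single α 1)
  · rw [hsymm]
  · filter_upwards [hΩ.mem_nhds hx] with z hz
    exact (diffAt_of_mem hΩ hy hz).hasFDerivAt

lemma pd_CG (hΩ : IsOpen Ω) (hy : ContDiffOn ℝ 2 y Ω) (hx : x ∈ Ω) (k α β : Fin 3) :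
    pd k (fun z => ((jac y z)ᵀ * jac y z) α β) x
      = ∑ i, (jac y x i α * pj k y x i β + jac y x i β * pj k y x i α) := by
  have hE : ∀ i γ, HasFDerivAt (fun z => jac y z i γ) ((entryCLM i γ).comp (DJ y x)) x :=
    fun i γ => (entryCLM i γ).hasFDerivAt.comp x (hasFDerivAt_jac hΩ hy hx)
  have hsum : HasFDerivAt (fun z => ∑ i, jac y z i α * jac y z i β)
      (∑ i, (jac y x i α • ((entryCLM i β).comp (DJ y x))
        + jac y x i β • ((entryCLM i α).comp (DJ y x)))) x :=
    HasFDerivAt.fun_sum fun i _ => (hE i α).mul (hE i β)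
  have hfun : (fun z => ((jac y z)ᵀ * jac y z) α β)
      = fun z => ∑ i, jac y z i α * jac y z i β := by
    funext z
    simp [Matrix.mul_apply, Matrix.transpose_apply]
  rw [pd, hfun, hsum.fderiv]
  rw [ContinuousLinearMap.sum_apply]
  refine Finset.sum_congr rfl fun i _ => ?_
  have hDJ := DJ_single hΩ hy hx k
  simp [hDJ]

/-- Matrix algebra: recovering `D₁ = F G⁻¹ D₂`. -/
lemma alg_step (F G D₁ D₂ : M3) (hF : IsUnit F.det) (hG : IsUnit G.det)
    (hC : Fᵀ * F = Gᵀ * G) (hS : Fᵀ * D₁ = Gᵀ * D₂) : D₁ = F * G⁻¹ * D₂ := by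
  have hFT : IsUnit Fᵀ.det := by rwa [Matrix.det_transpose]
  have h1 : Fᵀ * (F * G⁻¹) = Gᵀ := by
    rw [← Matrix.mul_assoc, hC, Matrix.mul_assoc, Matrix.mul_nonsing_inv _ hG, Matrix.mul_one]
  calc D₁ = (Fᵀ)⁻¹ * (Fᵀ * D₁) := by
        rw [← Matrix.mul_assoc, Matrix.nonsing_inv_mul _ hFT, Matrix.one_mul]
    _ = (Fᵀ)⁻¹ * (Gᵀ * D₂) := by rw [hS]
    _ = (Fᵀ)⁻¹ * (Fᵀ * (F * G⁻¹) * D₂) := by rw [h1]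
    _ = F * G⁻¹ * D₂ := by
        rw [← Matrix.mul_assoc, ← Matrix.mul_assoc, Matrix.nonsing_inv_mul _ hFT, Matrix.one_mul]

lemma orth_step (F G : M3) (hG : IsUnit G.det) (hC : Fᵀ * F = Gᵀ * G) :
    (F * G⁻¹)ᵀ * (F * G⁻¹) = 1 := by
  have hGT : IsUnit Gᵀ.det := by rwa [Matrix.det_transpose]
  rw [Matrix.transpose_mul, Matrix.transpose_nonsing_inv]
  calc (Gᵀ)⁻¹ * Fᵀ * (F * G⁻¹) = (Gᵀ)⁻¹ * (Fᵀ * F * G⁻¹) := by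
        rw [Matrix.mul_assoc, Matrix.mul_assoc]
    _ = (Gᵀ)⁻¹ * (Gᵀ * (G * G⁻¹)) := by rw [hC, Matrix.mul_assoc]
    _ = (Gᵀ)⁻¹ * Gᵀ := by rw [Matrix.mul_nonsing_inv _ hG, Matrix.mul_one]
    _ = 1 := Matrix.nonsing_inv_mul _ hGT

lemma det_step (F G : M3) (hF : 0 < F.det) (hG : 0 < G.det) (hC : Fᵀ * F = Gᵀ * G) :
    (F * G⁻¹).det = 1 := by
  have h2 : F.det ^ 2 = G.det ^ 2 := by
    have := congrArg Matrix.det hC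
    simpa [Matrix.det_mul, Matrix.det_transpose, sq] using this
  have h3 : F.det = G.det := by nlinarith
  rw [Matrix.det_mul, Matrix.det_nonsing_inv, Ring.inverse_eq_inv', h3]
  exact mul_inv_cancel₀ (ne_of_gt hG)

end WeingartenAux

open WeingartenAux in
/-- If two C² deformations of a connected open set `Ω ⊆ ℝ³` (Jacobians with positive
determinant) have the same right Cauchy–Green field `(Dy)ᵀ Dy` on `Ω`, then they are
rigidly related: `y₁ x = R y₂ x + t` on `Ω` with `R` a constant proper orthogonal matrix
and `t` a constant vector. -/
theorem weingarten_stmt1 (Ω : Set E3) (hΩ : IsOpen Ω) (hconn : IsConnected Ω)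
    (y₁ y₂ : E3 → E3)
    (h₁ : ContDiffOn ℝ 2 y₁ Ω) (h₂ : ContDiffOn ℝ 2 y₂ Ω)
    (hdet₁ : ∀ x ∈ Ω, 0 < (jac y₁ x).det) (hdet₂ : ∀ x ∈ Ω, 0 < (jac y₂ x).det)
    (hCG : ∀ x ∈ Ω, (jac y₁ x)ᵀ * jac y₁ x = (jac y₂ x)ᵀ * jac y₂ x) :
    ∃ (R : Matrix (Fin 3) (Fin 3) ℝ) (t : E3),
      Rᵀ * R = 1 ∧ R.det = 1 ∧
      ∀ x ∈ Ω, ∀ i : Fin 3, y₁ x i = (∑ j, R i j * y₂ x j) + t i := by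
  classical
  obtain ⟨x₀, hx₀⟩ := hconn.nonempty
  have hpre : IsPreconnected Ω := hconn.isPreconnected
  have hUF : ∀ x ∈ Ω, IsUnit (jac y₁ x).det := fun x hx => (hdet₁ x hx).ne'.isUnit
  have hUG : ∀ x ∈ Ω, IsUnit (jac y₂ x).det := fun x hx => (hdet₂ x hx).ne'.isUnit
  -- Step 1: the Christoffel-type identity determines `Fᵀ ∂ₖF` from the Cauchy–Green field.
  have twoS : ∀ (y : E3 → E3), ContDiffOn ℝ 2 y Ω → ∀ x ∈ Ω, ∀ α β k : Fin 3,
      2 * (∑ i, jac y x i α * pj k y x i β)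
        = pd β (fun z => ((jac y z)ᵀ * jac y z) α k) x
          + pd k (fun z => ((jac y z)ᵀ * jac y z) α β) x
          - pd α (fun z => ((jac y z)ᵀ * jac y z) β k) x := by
    intro y hy x hx α β k
    rw [pd_CG hΩ hy hx, pd_CG hΩ hy hx, pd_CG hΩ hy hx,
      ← Finset.sum_add_distrib, ← Finset.sum_sub_distrib, Finset.mul_sum]
    refine Finset.sum_congr rfl fun i _ => ?_
    rw [pj_symm hΩ hy hx β i k, pj_symm hΩ hy hx β i α, pj_symm hΩ hy hx α i k,
      pj_symm hΩ hy hx α i β]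
    ring
  have hCpd : ∀ x ∈ Ω, ∀ γ δ m : Fin 3,
      pd m (fun z => ((jac y₁ z)ᵀ * jac y₁ z) γ δ) x
        = pd m (fun z => ((jac y₂ z)ᵀ * jac y₂ z) γ δ) x := by
    intro x hx γ δ m
    rw [pd, pd]
    congr 1
    apply Filter.EventuallyEq.fderiv_eq
    filter_upwards [hΩ.mem_nhds hx] with z hz
    rw [hCG z hz]
  have hS : ∀ x ∈ Ω, ∀ k : Fin 3,
      (jac y₁ x)ᵀ * pj k y₁ x = (jac y₂ x)ᵀ * pj k y₂ x := by
    intro x hx k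
    ext α β
    have h1 := twoS y₁ h₁ x hx α β k
    have h2 := twoS y₂ h₂ x hx α β k
    rw [hCpd x hx α k β, hCpd x hx α β k, hCpd x hx β k α] at h1
    have h3 : (∑ i, jac y₁ x i α * pj k y₁ x i β)
        = ∑ i, jac y₂ x i α * pj k y₂ x i β := by linarith
    simpa [Matrix.mul_apply, Matrix.transpose_apply] using h3
  have hkey : ∀ x ∈ Ω, ∀ k : Fin 3,
      pj k y₁ x = jac y₁ x * (jac y₂ x)⁻¹ * pj k y₂ x := fun x hx k =>
    alg_step _ _ _ _ (hUF x hx) (hUG x hx) (hCG x hx) (hS x hx k)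
  -- Step 2: the rotation field is constant.
  set Rm : E3 → M3 := fun z => jac y₁ z * Ring.inverse (jac y₂ z) with hRm_def
  have hRd : ∀ x ∈ Ω, HasFDerivAt Rm (0 : E3 →L[ℝ] M3) x := by
    intro x hx
    obtain ⟨uG, huG⟩ := (Matrix.isUnit_iff_isUnit_det _).mpr (hUG x hx)
    have huGi : (↑uG⁻¹ : M3) = (jac y₂ x)⁻¹ := by
      rw [Matrix.nonsing_inv_eq_ringInverse, ← huG, Ring.inverse_unit]
    have hF : HasFDerivAt (fun z => jac y₁ z) (DJ y₁ x) x := hasFDerivAt_jac hΩ h₁ hx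
    have hG : HasFDerivAt (fun z => jac y₂ z) (DJ y₂ x) x := hasFDerivAt_jac hΩ h₂ hx
    have hInv : HasFDerivAt (fun z => Ring.inverse (jac y₂ z))
        ((-(ContinuousLinearMap.mulLeftRight ℝ M3 ↑uG⁻¹ ↑uG⁻¹)).comp (DJ y₂ x)) x := by
      have h' := hasFDerivAt_ringInverse (𝕜 := ℝ) uG
      rw [huG] at h'
      exact h'.comp x hG
    have hmul := hF.mul' hInv
    have hzero : @HAdd.hAdd (E3 →L[ℝ] M3) (E3 →L[ℝ] M3) (E3 →L[ℝ] M3) _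
          (jac y₁ x • ((-(ContinuousLinearMap.mulLeftRight ℝ M3 ↑uG⁻¹ ↑uG⁻¹)).comp
          (DJ y₂ x))) (MulOpposite.op (Ring.inverse (jac y₂ x)) • DJ y₁ x) = 0 := by
      refine ContinuousLinearMap.ext fun v => ?_
      have hDJ1 : DJ y₁ x v = jac y₁ x * (jac y₂ x)⁻¹ * DJ y₂ x v := by
        have e1 : ∀ y : E3 → E3, ContDiffOn ℝ 2 y Ω → DJ y x v = ∑ k, v k • pj k y x :=
          fun y hy => by
            conv_lhs => rw [e3_eq_sum v]
            rw [map_sum]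
            simp only [map_smul, DJ_single hΩ hy hx]
        rw [e1 y₁ h₁, e1 y₂ h₂, Finset.mul_sum]
        refine Finset.sum_congr rfl fun k _ => ?_
        rw [hkey x hx k, mul_smul_comm]
      change jac y₁ x * -((↑uG⁻¹ : M3) * DJ y₂ x v * (↑uG⁻¹ : M3)) + DJ y₁ x v * Ring.inverse (jac y₂ x) = 0
      rw [hDJ1, huGi, ← Matrix.nonsing_inv_eq_ringInverse]
      simp only [mul_neg, Matrix.mul_assoc]
      exact neg_add_cancel _
    erw [hzero] at hmul
    exact hmul
  have Rconst : ∀ x ∈ Ω, Rm x = Rm x₀ := fun x hx =>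
    const_of_hasFDerivAt_zero hΩ hpre hRd hx hx₀
  refine ⟨jac y₁ x₀ * (jac y₂ x₀)⁻¹, fun i => y₁ x₀ i - ∑ j, (jac y₁ x₀ * (jac y₂ x₀)⁻¹) i j * y₂ x₀ j,
    orth_step _ _ (hUG x₀ hx₀) (hCG x₀ hx₀),
    det_step _ _ (hdet₁ x₀ hx₀) (hdet₂ x₀ hx₀) (hCG x₀ hx₀), ?_⟩
  set R₀ : M3 := jac y₁ x₀ * (jac y₂ x₀)⁻¹ with hR₀_def
  have hRmx₀ : Rm x₀ = R₀ := by
    rw [hRm_def, hR₀_def, Matrix.nonsing_inv_eq_ringInverse]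
  -- Step 3: `jac y₁ = R₀ * jac y₂` on `Ω`.
  have hFRG : ∀ x ∈ Ω, jac y₁ x = R₀ * jac y₂ x := by
    intro x hx
    calc jac y₁ x = jac y₁ x * ((jac y₂ x)⁻¹ * jac y₂ x) := by
          rw [Matrix.nonsing_inv_mul _ (hUG x hx), Matrix.mul_one]
      _ = Rm x * jac y₂ x := by
          rw [hRm_def, ← Matrix.mul_assoc, Matrix.nonsing_inv_eq_ringInverse]
      _ = R₀ * jac y₂ x := by rw [Rconst x hx, hRmx₀]
  -- Step 4: the difference `y₁ - R₀ y₂` is constant on `Ω`.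
  have hjac_comp : ∀ (y : E3 → E3), ContDiffOn ℝ 2 y Ω → ∀ x ∈ Ω, ∀ i k : Fin 3,
      fderiv ℝ y x (Pi.single k 1) i = jac y x i k := by
    intro y hy x hx i k
    rw [jac_eq_of_diff (diffAt_of_mem hΩ hy hx)]
    rfl
  have hw : ∀ i : Fin 3, ∀ x ∈ Ω,
      HasFDerivAt (fun z => y₁ z i - ∑ j, R₀ i j * y₂ z j) (0 : E3 →L[ℝ] ℝ) x := by
    intro i x hx
    have hd₁ := diffAt_of_mem hΩ h₁ hx
    have hd₂ := diffAt_of_mem hΩ h₂ hx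
    have hA : HasFDerivAt (fun z => y₁ z i)
        ((ContinuousLinearMap.proj (R := ℝ) (φ := fun _ : Fin 3 => ℝ) i).comp
          (fderiv ℝ y₁ x)) x :=
      (ContinuousLinearMap.proj (R := ℝ) (φ := fun _ : Fin 3 => ℝ) i).hasFDerivAt.comp x
        hd₁.hasFDerivAt
    have hB : HasFDerivAt (fun z => ∑ j, R₀ i j * y₂ z j)
        (∑ j, R₀ i j • ((ContinuousLinearMap.proj (R := ℝ) (φ := fun _ : Fin 3 => ℝ) j).comp
          (fderiv ℝ y₂ x))) x :=
      HasFDerivAt.fun_sum fun j _ =>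
        (((ContinuousLinearMap.proj (R := ℝ) (φ := fun _ : Fin 3 => ℝ) j)).hasFDerivAt.comp x
          hd₂.hasFDerivAt).const_mul (R₀ i j)
    have hsub := hA.sub hB
    have hz : (ContinuousLinearMap.proj (R := ℝ) (φ := fun _ : Fin 3 => ℝ) i).comp
          (fderiv ℝ y₁ x)
        - ∑ j, R₀ i j • ((ContinuousLinearMap.proj (R := ℝ) (φ := fun _ : Fin 3 => ℝ) j).comp
          (fderiv ℝ y₂ x)) = 0 := by
      rw [sub_eq_zero]
      refine clm_ext_basis fun k => ?_
      simp only [ContinuousLinearMap.sum_apply, ContinuousLinearMap.smul_apply,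
        ContinuousLinearMap.comp_apply, ContinuousLinearMap.proj_apply, smul_eq_mul]
      rw [hjac_comp y₁ h₁ x hx i k]
      have hj2 : ∀ j, fderiv ℝ y₂ x (Pi.single k 1) j = jac y₂ x j k :=
        fun j => hjac_comp y₂ h₂ x hx j k
      simp only [hj2]
      rw [hFRG x hx]
      simp [Matrix.mul_apply]
    rw [hz] at hsub
    exact hsub
  intro x hx i
  have hconst := const_of_hasFDerivAt_zero hΩ hpre (fun z hz => hw i z hz) hx hx₀
  simp only at hconst ⊢
  linarith [hconst]
end
end

section
/- Let Ω ⊆ ℝ³ be an open set, let ε be a twice continuously differentiable symmetric 3×3 matrix field on Ω satisfying the St.-Venant compatibility condition, and set E_{ikl} := ε_{il,k} − ε_{kl,i}. If γ₀ and γ₁ are C¹ loops in Ω that are freely homotopic in Ω, then for all i,k ∈ {1,2,3}: ∫₀¹ Σ_l E_{ikl}(γ₀(t)) (γ₀)'_l(t) dt = ∫₀¹ Σ_l E_{ikl}(γ₁(t)) (γ₁)'_l(t) dt. Moreover, for any C¹ loop γ the 3×3 matrix with entries ω_{ik} := ∫₀¹ Σ_l E_{ikl}(γ(t)) γ'_l(t)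 dt is skew-symmetric. -/
noncomputable section

open Matrix

/-- The St.-Venant compatibility condition for a matrix field `ε` on `Ω`. -/
def StVenant (ε : Fin 3 → Fin 3 → E3 → ℝ) (Ω : Set E3) : Prop :=
  ∀ x ∈ Ω, ∀ i k l m : Fin 3,
    pd m (pd k (ε i l)) x - pd m (pd i (ε k l)) x
      - pd l (pd k (ε i m)) x + pd l (pd i (ε k m)) x = 0

/-- The field `E_{ikl} := ε_{il,k} − ε_{kl,i}` derived from a strain field `ε`. -/
noncomputable def Efield (ε : Fin 3 → Fin 3 → E3 → ℝ) (i k l : Fin 3) (x : E3) : ℝ :=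
  pd k (ε i l) x - pd i (ε k l) x

/-- A C¹ loop in `Ω`: a continuously differentiable map `γ : [0,1] → Ω` with `γ 0 = γ 1`. -/
def IsC1LoopIn (γ : ℝ → E3) (Ω : Set E3) : Prop :=
  ContDiffOn ℝ 1 γ (Set.Icc 0 1) ∧ (∀ t ∈ Set.Icc (0:ℝ) 1, γ t ∈ Ω) ∧ γ 0 = γ 1

/-- Free homotopy of loops within `Ω`. -/
def FreelyHomotopicIn (γ₀ γ₁ : ℝ → E3) (Ω : Set E3) : Prop :=
  ∃ Hom : ℝ × ℝ → E3,
    ContinuousOn Hom (Set.Icc 0 1 ×ˢ Set.Icc 0 1) ∧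
    (∀ p ∈ (Set.Icc (0:ℝ) 1 ×ˢ Set.Icc (0:ℝ) 1), Hom p ∈ Ω) ∧
    (∀ t ∈ Set.Icc (0:ℝ) 1, Hom (0, t) = γ₀ t) ∧
    (∀ t ∈ Set.Icc (0:ℝ) 1, Hom (1, t) = γ₁ t) ∧
    (∀ s ∈ Set.Icc (0:ℝ) 1, Hom (s, 0) = Hom (s, 1))

open Metric MeasureTheory intervalIntegral Set

set_option linter.unusedVariables false

/-- The 1-form associated to a vector field `F`. -/
noncomputable def vf (F : Fin 3 → E3 → ℝ) (x : E3) : E3 →L[ℝ] ℝ :=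
  ∑ l, F l x • ContinuousLinearMap.proj l

@[simp] lemma vf_apply (F : Fin 3 → E3 → ℝ) (x v : E3) :
    vf F x v = ∑ l, F l x * v l := by
  simp [vf, ContinuousLinearMap.sum_apply, smul_eq_mul]

lemma fderiv_apply_eq_sum (φ : E3 → ℝ) (x : E3) (w : E3) :
    fderiv ℝ φ x w = ∑ l, w l * pd l φ x := by
  have hw : w = ∑ l, w l • (Pi.single l 1 : E3) := by
    funext j
    simp [Finset.sum_apply, Pi.single_apply]
  conv_lhs => rw [hw]
  rw [map_sum]
  simp [pd, smul_eq_mul]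

lemma swap_sum {F : Fin 3 → E3 → ℝ} {Ω : Set E3}
    (hcl : ∀ x ∈ Ω, ∀ l m, pd m (F l) x = pd l (F m) x)
    {p : E3} (hp : p ∈ Ω) (w v : E3) :
    ∑ l, w l * (fderiv ℝ (F l) p v) = ∑ m, v m * (fderiv ℝ (F m) p w) := by
  simp_rw [fderiv_apply_eq_sum, Finset.mul_sum]
  rw [Finset.sum_comm]
  refine Finset.sum_congr rfl fun m _ => Finset.sum_congr rfl fun l _ => ?_
  rw [hcl p hp l m]
  ring

/-- The point `c + u • (x - c)`. -/
noncomputable def sg (c : E3) (u : ℝ) (x : E3) : E3 := c + u • (x - c)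

lemma sg_one (c x : E3) : sg c 1 x = x := by simp [sg]

lemma sg_hasFDerivAt (c : E3) (u : ℝ) (x : E3) :
    HasFDerivAt (sg c u) (u • ContinuousLinearMap.id ℝ E3) x := by
  have := (((hasFDerivAt_id (𝕜 := ℝ) x).sub_const c).const_smul u).const_add c
  simpa [sg] using this

lemma sg_hasDerivAt (c x : E3) (u : ℝ) :
    HasDerivAt (fun u => sg c u x) (x - c) u := by
  have := ((hasDerivAt_id u).smul_const (x - c)).const_add c
  simpa [sg] using this

lemma sg_continuous (c x : E3) : Continuous (fun u => sg c u x) :=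
  continuous_const.add (continuous_id.smul continuous_const)

lemma sub_apply_hasFDerivAt (l : Fin 3) (c x : E3) :
    HasFDerivAt (fun x : E3 => (x - c) l)
      (ContinuousLinearMap.proj l : E3 →L[ℝ] ℝ) x := by
  have h : HasFDerivAt (fun x : E3 => x l - c l)
      (ContinuousLinearMap.proj l : E3 →L[ℝ] ℝ) x :=
    ((ContinuousLinearMap.proj l : E3 →L[ℝ] ℝ).hasFDerivAt).sub_const (c l)
  simpa [Pi.sub_apply] using h

lemma norm_proj_le (l : Fin 3) : ‖(ContinuousLinearMap.proj l : E3 →L[ℝ] ℝ)‖ ≤ 1 := by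
  refine ContinuousLinearMap.opNorm_le_bound _ zero_le_one fun v => ?_
  simpa using norm_le_pi_norm v l

lemma mem_closedBall_sg {c x x₀ : E3} {δ s : ℝ} (hx : x ∈ closedBall x₀ δ)
    (hs : dist x₀ c + δ ≤ s) {u : ℝ} (hu : u ∈ Icc (0:ℝ) 1) :
    sg c u x ∈ closedBall c s := by
  rw [mem_closedBall, dist_eq_norm, sg, add_sub_cancel_left, norm_smul]
  have h1 : ‖x - c‖ ≤ dist x₀ c + δ := by
    rw [← dist_eq_norm]
    calc dist x c ≤ dist x x₀ + dist x₀ c := dist_triangle _ _ _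
    _ ≤ δ + dist x₀ c := by gcongr; exact mem_closedBall.mp hx
    _ = dist x₀ c + δ := by ring
  have h2 : |u| ≤ 1 := abs_le.mpr ⟨by linarith [hu.1], hu.2⟩
  calc |u| * ‖x - c‖ ≤ 1 * (dist x₀ c + δ) := by
        apply mul_le_mul h2 h1 (norm_nonneg _) zero_le_one
    _ = dist x₀ c + δ := one_mul _
    _ ≤ s := hs

theorem pot {F : Fin 3 → E3 → ℝ} {Ω : Set E3}
    (hF : ∀ l, ∀ x ∈ Ω, ContDiffAt ℝ 1 (F l) x)
    (hcl : ∀ x ∈ Ω, ∀ l m, pd m (F l) x = pd l (F m) x)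
    {c : E3} {r : ℝ} (hB : ball c r ⊆ Ω) :
    ∃ f : E3 → ℝ, ∀ x ∈ ball c r, HasFDerivAt f (vf F x) x := by
  refine ⟨fun x => ∫ u in (0:ℝ)..1, ∑ l, F l (sg c u x) * (x - c) l, ?_⟩
  intro x₀ hx₀
  have hd : dist x₀ c < r := mem_ball.mp hx₀
  set d : ℝ := dist x₀ c with hd_def
  have hd0 : 0 ≤ d := dist_nonneg
  set δ : ℝ := (r - d) / 2 with hδ_def
  have hδ : 0 < δ := by simp only [hδ_def]; linarith
  set s : ℝ := d + δ with hs_def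
  have hs0 : 0 ≤ s := by positivity
  have hsr : s < r := by simp only [hs_def, hδ_def]; linarith
  have hSsub : closedBall c s ⊆ Ω := (closedBall_subset_ball hsr).trans hB
  have hmemS : ∀ x ∈ ball x₀ δ, ∀ u ∈ Icc (0:ℝ) 1, sg c u x ∈ closedBall c s :=
    fun x hx u hu => mem_closedBall_sg (ball_subset_closedBall hx) le_rfl hu
  have hmemΩ : ∀ x ∈ ball x₀ δ, ∀ u ∈ Icc (0:ℝ) 1, sg c u x ∈ Ω :=
    fun x hx u hu => hSsub (hmemS x hx u hu)
  have hx₀ball : x₀ ∈ ball x₀ δ := mem_ball_self hδ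
  have hIoc : Set.uIoc (0:ℝ) 1 = Ioc 0 1 := uIoc_of_le zero_le_one
  have hIccsub : Set.uIoc (0:ℝ) 1 ⊆ Icc 0 1 := by rw [hIoc]; exact Ioc_subset_Icc_self
  -- continuity of fderiv of F l on Ω
  have hfd_cont : ∀ l, ∀ y ∈ Ω, ContinuousAt (fun z => fderiv ℝ (F l) z) y := by
    intro l y hy
    exact ((hF l y hy).fderiv_right (m := 0) (by norm_num)).continuousAt
  -- bounds
  have hMl : ∀ l : Fin 3, ∃ M : ℝ, ∀ y ∈ closedBall c s,
      ‖fderiv ℝ (F l) y‖ ≤ M ∧ |F l y| ≤ M := by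
    intro l
    obtain ⟨M1, hM1⟩ := (isCompact_closedBall c s).exists_bound_of_continuousOn
      (fun y hy => (hfd_cont l y (hSsub hy)).continuousWithinAt)
    obtain ⟨M2, hM2⟩ := (isCompact_closedBall c s).exists_bound_of_continuousOn
      (f := fun y => F l y) (fun y hy => ((hF l y (hSsub hy)).continuousAt).continuousWithinAt)
    refine ⟨max M1 M2, fun y hy => ⟨(hM1 y hy).trans (le_max_left _ _), ?_⟩⟩
    have := hM2 y hy
    rw [Real.norm_eq_abs] at this
    exact this.trans (le_max_right _ _)
  choose M hM using hMl
  have hM0 : ∀ l, 0 ≤ M l := fun l =>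
    le_trans (norm_nonneg _) (hM l c (mem_closedBall_self hs0)).1
  -- the derivative in x of the integrand
  set F' : E3 → ℝ → (E3 →L[ℝ] ℝ) := fun x u => ∑ l,
      (F l (sg c u x) • (ContinuousLinearMap.proj l : E3 →L[ℝ] ℝ)
        + (x - c) l • ((fderiv ℝ (F l) (sg c u x)).comp
            (u • ContinuousLinearMap.id ℝ E3))) with hF'_def
  -- continuity of F' x₀ in u on Icc 0 1
  have hF'cont : ContinuousOn (F' x₀) (Icc (0:ℝ) 1) := by
    rw [hF'_def]
    apply continuousOn_finset_sum
    intro l _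
    apply ContinuousOn.add
    · apply ContinuousOn.fun_smul
      · intro u hu
        have hg : ContinuousAt (fun u : ℝ => sg c u x₀) u := (sg_continuous c x₀).continuousAt
        exact (ContinuousAt.comp (x := u) (f := fun u : ℝ => sg c u x₀)
          (hF l _ (hmemΩ x₀ hx₀ball u hu)).continuousAt hg).continuousWithinAt
      · exact continuousOn_const
    · apply ContinuousOn.fun_smul continuousOn_const
      apply ContinuousOn.clm_comp
      · intro u hu
        have hg : ContinuousAt (fun u : ℝ => sg c u x₀) u := (sg_continuous c x₀).continuousAt
        exact (ContinuousAt.comp (x := u) (f := fun u : ℝ => sg c u x₀)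
          (hfd_cont l _ (hmemΩ x₀ hx₀ball u hu)) hg).continuousWithinAt
      · exact (continuous_id.smul continuous_const).continuousOn
  -- integrand continuity in u, for x in the ball
  have hint_cont : ∀ x ∈ ball x₀ δ,
      ContinuousOn (fun u => ∑ l, F l (sg c u x) * (x - c) l) (Icc (0:ℝ) 1) := by
    intro x hx
    apply continuousOn_finset_sum
    intro l _
    apply ContinuousOn.mul _ continuousOn_const
    intro u hu
    have hg : ContinuousAt (fun u : ℝ => sg c u x) u := (sg_continuous c x).continuousAt
    exact (ContinuousAt.comp (x := u) (f := fun u : ℝ => sg c u x)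
      (hF l _ (hmemΩ x hx u hu)).continuousAt hg).continuousWithinAt
  have hmain := intervalIntegral.hasFDerivAt_integral_of_dominated_of_fderiv_le
    (μ := volume) (a := (0:ℝ)) (b := 1) (F := fun x u => ∑ l, F l (sg c u x) * (x - c) l)
    (F' := F') (x₀ := x₀) (bound := fun _ => ∑ l, (M l + s * M l)) (ball_mem_nhds x₀ hδ)
    ?_ ?_ ?_ ?_ ?_ ?_
  · -- convert the derivative
    have hFi' : IntervalIntegrable (F' x₀) volume 0 1 := by
      apply ContinuousOn.intervalIntegrable
      rwa [uIcc_of_le zero_le_one]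
    have hkey : (∫ u in (0:ℝ)..1, F' x₀ u) = vf F x₀ := by
      apply ContinuousLinearMap.ext
      intro v
      rw [ContinuousLinearMap.intervalIntegral_apply hFi', vf_apply]
      set φ : ℝ → ℝ := fun u => u * ∑ m, F m (sg c u x₀) * v m with hφ_def
      have hder : ∀ u ∈ Icc (0:ℝ) 1, HasDerivAt φ ((F' x₀ u) v) u := by
        intro u hu
        have hp : sg c u x₀ ∈ Ω := hmemΩ x₀ hx₀ball u hu
        have hm : ∀ m : Fin 3, HasDerivAt (fun u => F m (sg c u x₀))
            (fderiv ℝ (F m) (sg c u x₀) (x₀ - c)) u := by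
          intro m
          exact (((hF m _ hp).differentiableAt one_ne_zero).hasFDerivAt).comp_hasDerivAt u
            (sg_hasDerivAt c x₀ u)
        have hsum : HasDerivAt (fun u => ∑ m, F m (sg c u x₀) * v m)
            (∑ m, fderiv ℝ (F m) (sg c u x₀) (x₀ - c) * v m) u :=
          HasDerivAt.fun_sum (fun m _ => (hm m).mul_const (v m))
        have hphi := (hasDerivAt_id u).mul hsum
        have heq : (F' x₀ u) v = 1 * (∑ m, F m (sg c u x₀) * v m)
            + u * (∑ m, fderiv ℝ (F m) (sg c u x₀) (x₀ - c) * v m) := by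
          have happ : (F' x₀ u) v = ∑ l, (F l (sg c u x₀) * v l
              + (x₀ - c) l * (u * fderiv ℝ (F l) (sg c u x₀) v)) := by
            rw [hF'_def]
            simp only [ContinuousLinearMap.sum_apply, ContinuousLinearMap.add_apply,
              ContinuousLinearMap.coe_smul', Pi.smul_apply, ContinuousLinearMap.proj_apply,
              ContinuousLinearMap.coe_comp', Function.comp_apply,
              ContinuousLinearMap.id_apply, smul_eq_mul, _root_.map_smul]
          rw [happ, Finset.sum_add_distrib, one_mul]
          congr 1
          have hswap := swap_sum hcl hp (x₀ - c) v
          calc ∑ l, (x₀ - c) l * (u * fderiv ℝ (F l) (sg c u x₀) v)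
              = u * ∑ l, (x₀ - c) l * fderiv ℝ (F l) (sg c u x₀) v := by
                rw [Finset.mul_sum]; exact Finset.sum_congr rfl fun l _ => by ring
            _ = u * ∑ m, v m * fderiv ℝ (F m) (sg c u x₀) (x₀ - c) := by rw [hswap]
            _ = u * ∑ m, fderiv ℝ (F m) (sg c u x₀) (x₀ - c) * v m := by
                congr 1; exact Finset.sum_congr rfl fun m _ => by ring
        rw [heq]
        exact hphi
      have hint : IntervalIntegrable (fun u => (F' x₀ u) v) volume 0 1 := by
        apply ContinuousOn.intervalIntegrable
        rw [uIcc_of_le zero_le_one]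
        exact (ContinuousLinearMap.apply ℝ ℝ v).continuous.comp_continuousOn hF'cont
      rw [intervalIntegral.integral_eq_sub_of_hasDerivAt
        (fun u hu => hder u (by rwa [uIcc_of_le zero_le_one] at hu)) hint]
      simp [hφ_def, sg_one]
    rw [hkey] at hmain
    exact hmain
  · -- hF_meas
    filter_upwards [ball_mem_nhds x₀ hδ] with x hx
    exact ((hint_cont x hx).mono hIccsub).aestronglyMeasurable measurableSet_uIoc
  · -- hF_int
    apply ContinuousOn.intervalIntegrable
    rw [uIcc_of_le zero_le_one]
    exact hint_cont x₀ hx₀ball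
  · -- hF'_meas
    exact (hF'cont.mono hIccsub).aestronglyMeasurable measurableSet_uIoc
  · -- h_bound
    apply Filter.Eventually.of_forall
    intro u hu x hx
    have huIcc : u ∈ Icc (0:ℝ) 1 := hIccsub hu
    have hu1 : |u| ≤ 1 := abs_le.mpr ⟨by linarith [huIcc.1], huIcc.2⟩
    rw [hF'_def]
    refine (norm_sum_le _ _).trans ?_
    apply Finset.sum_le_sum
    intro l _
    have hpS : sg c u x ∈ closedBall c s := hmemS x hx u huIcc
    have hb1 : ‖F l (sg c u x) • (ContinuousLinearMap.proj l : E3 →L[ℝ] ℝ)‖ ≤ M l := by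
      refine ((ContinuousLinearMap.opNorm_smul_le _ _).trans
        (by rw [Real.norm_eq_abs])).trans ?_
      calc |F l (sg c u x)| * ‖(ContinuousLinearMap.proj l : E3 →L[ℝ] ℝ)‖
          ≤ M l * 1 := mul_le_mul (hM l _ hpS).2 (norm_proj_le l) (norm_nonneg _) (hM0 l)
        _ = M l := mul_one _
    have hxc : ‖x - c‖ ≤ s := by
      rw [← dist_eq_norm]
      calc dist x c ≤ dist x x₀ + dist x₀ c := dist_triangle _ _ _
        _ ≤ δ + d := add_le_add (mem_ball.mp hx).le le_rfl
        _ = s := by rw [hs_def]; ring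
    have hb2 : ‖(x - c) l • ((fderiv ℝ (F l) (sg c u x)).comp
        (u • ContinuousLinearMap.id ℝ E3))‖ ≤ s * M l := by
      refine ((ContinuousLinearMap.opNorm_smul_le _ _).trans
        (by rw [Real.norm_eq_abs])).trans ?_
      have h1 : |(x - c) l| ≤ s := by
        have := norm_le_pi_norm (x - c) l
        rw [Real.norm_eq_abs] at this
        exact this.trans hxc
      have h2 : ‖(fderiv ℝ (F l) (sg c u x)).comp (u • ContinuousLinearMap.id ℝ E3)‖
          ≤ M l := by
        refine (ContinuousLinearMap.opNorm_comp_le _ _).trans ?_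
        have h3 : ‖u • ContinuousLinearMap.id ℝ E3‖ ≤ 1 := by
          refine ((ContinuousLinearMap.opNorm_smul_le _ _).trans
            (by rw [Real.norm_eq_abs])).trans ?_
          calc |u| * ‖ContinuousLinearMap.id ℝ E3‖ ≤ 1 * 1 :=
            mul_le_mul hu1 ContinuousLinearMap.norm_id_le (norm_nonneg _) zero_le_one
          _ = 1 := mul_one _
        calc ‖fderiv ℝ (F l) (sg c u x)‖ * ‖u • ContinuousLinearMap.id ℝ E3‖
            ≤ M l * 1 := mul_le_mul (hM l _ hpS).1 h3 (norm_nonneg _) (hM0 l)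
          _ = M l := mul_one _
      exact mul_le_mul h1 h2 (norm_nonneg _) hs0
    calc ‖F l (sg c u x) • (ContinuousLinearMap.proj l : E3 →L[ℝ] ℝ)
        + (x - c) l • ((fderiv ℝ (F l) (sg c u x)).comp
            (u • ContinuousLinearMap.id ℝ E3))‖
        ≤ ‖F l (sg c u x) • (ContinuousLinearMap.proj l : E3 →L[ℝ] ℝ)‖
          + ‖(x - c) l • ((fderiv ℝ (F l) (sg c u x)).comp
              (u • ContinuousLinearMap.id ℝ E3))‖ := norm_add_le _ _
      _ ≤ M l + s * M l := add_le_add hb1 hb2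
  · -- bound integrable
    exact intervalIntegrable_const
  · -- h_diff
    apply Filter.Eventually.of_forall
    intro u hu x hx
    have huIcc : u ∈ Icc (0:ℝ) 1 := hIccsub hu
    rw [hF'_def]
    apply HasFDerivAt.fun_sum
    intro l _
    have hp : sg c u x ∈ Ω := hmemΩ x hx u huIcc
    have houter : HasFDerivAt (F l) (fderiv ℝ (F l) (sg c u x)) (sg c u x) :=
      ((hF l _ hp).differentiableAt one_ne_zero).hasFDerivAt
    have hcomp := houter.comp x (sg_hasFDerivAt c u x)
    exact hcomp.mul (sub_apply_hasFDerivAt l c x)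

/-- Line integral of `F` along the straight segment from `a` to `b`. -/
noncomputable def chordInt (F : Fin 3 → E3 → ℝ) (a b : E3) : ℝ :=
  ∫ u in (0:ℝ)..1, ∑ l, F l (sg a u b) * (b - a) l

lemma chordInt_eq {F : Fin 3 → E3 → ℝ} {Ω : Set E3}
    (hF : ∀ l, ∀ x ∈ Ω, ContDiffAt ℝ 1 (F l) x)
    {z : E3} {ρ : ℝ} (hball : ball z ρ ⊆ Ω) {f : E3 → ℝ}
    (hf : ∀ y ∈ ball z ρ, HasFDerivAt f (vf F y) y)
    {a b : E3} (ha : a ∈ ball z ρ) (hb : b ∈ ball z ρ) :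
    chordInt F a b = f b - f a := by
  have hseg : ∀ u ∈ Icc (0:ℝ) 1, sg a u b ∈ ball z ρ := by
    intro u hu
    exact (convex_ball z ρ).add_smul_sub_mem ha hb hu
  have h0 : sg a 0 b = a := by simp [sg]
  have key : chordInt F a b = f (sg a 1 b) - f (sg a 0 b) := by
    rw [chordInt]
    apply intervalIntegral.integral_eq_sub_of_hasDerivAt
      (f := fun u => f (sg a u b)) (f' := fun u => ∑ l, F l (sg a u b) * (b - a) l)
    · intro u hu
      rw [uIcc_of_le zero_le_one] at hu
      have h1 := (hf _ (hseg u hu)).comp_hasDerivAt u (sg_hasDerivAt a b u)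
      simpa [vf_apply, Function.comp_def] using h1
    · apply ContinuousOn.intervalIntegrable
      rw [uIcc_of_le zero_le_one]
      apply continuousOn_finset_sum
      intro l _
      apply ContinuousOn.mul _ continuousOn_const
      intro u hu
      have hg : ContinuousAt (fun u : ℝ => sg a u b) u := (sg_continuous a b).continuousAt
      exact (ContinuousAt.comp (x := u) (f := fun u : ℝ => sg a u b)
        (hF l _ (hball (hseg u hu))).continuousAt hg).continuousWithinAt
  rw [key, sg_one, h0]

lemma pieceInt_eq {F : Fin 3 → E3 → ℝ} {Ω : Set E3}
    (hF : ∀ l, ∀ x ∈ Ω, ContDiffAt ℝ 1 (F l) x)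
    {z : E3} {ρ : ℝ} (hball : ball z ρ ⊆ Ω) {f : E3 → ℝ}
    (hf : ∀ y ∈ ball z ρ, HasFDerivAt f (vf F y) y)
    {γ : ℝ → E3} (hγ : ContDiffOn ℝ 1 γ (Icc 0 1))
    {a b : ℝ} (hab : a ≤ b) (h0 : 0 ≤ a) (h1 : b ≤ 1)
    (hmem : ∀ t ∈ Icc a b, γ t ∈ ball z ρ) :
    (∫ t in a..b, ∑ l, F l (γ t) * derivWithin γ (Icc 0 1) t l) = f (γ b) - f (γ a) := by
  have hsubI : Icc a b ⊆ Icc (0:ℝ) 1 := Icc_subset_Icc h0 h1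
  apply intervalIntegral.integral_eq_sub_of_hasDerivAt_of_le hab
  · -- continuity of f ∘ γ on [a, b]
    have hfc : ContinuousOn f (ball z ρ) := fun y hy =>
      (hf y hy).differentiableAt.continuousAt.continuousWithinAt
    exact hfc.comp (hγ.continuousOn.mono hsubI) hmem
  · -- derivative on Ioo
    intro t ht
    have ht01 : t ∈ Ioo (0:ℝ) 1 := ⟨lt_of_le_of_lt h0 ht.1, lt_of_lt_of_le ht.2 h1⟩
    have hnhds : Icc (0:ℝ) 1 ∈ nhds t := Icc_mem_nhds ht01.1 ht01.2
    have hdiff : DifferentiableAt ℝ γ t :=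
      ((hγ t (Ioo_subset_Icc_self ht01)).differentiableWithinAt one_ne_zero).differentiableAt hnhds
    have hdw : derivWithin γ (Icc 0 1) t = deriv γ t := derivWithin_of_mem_nhds hnhds
    have hγt : γ t ∈ ball z ρ := hmem t (Ioo_subset_Icc_self ht)
    have h2 := (hf (γ t) hγt).comp_hasDerivAt t hdiff.hasDerivAt
    rw [hdw]
    simpa [vf_apply, Function.comp_def] using h2
  · -- integrability
    apply ContinuousOn.intervalIntegrable
    rw [uIcc_of_le hab]
    apply continuousOn_finset_sum
    intro l _
    apply ContinuousOn.mul
    · have hFc : ContinuousOn (F l) (ball z ρ) := fun y hy =>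
        (hF l y (hball hy)).continuousAt.continuousWithinAt
      exact hFc.comp (hγ.continuousOn.mono hsubI) hmem
    · have hdc : ContinuousOn (derivWithin γ (Icc 0 1)) (Icc (0:ℝ) 1) :=
        hγ.continuousOn_derivWithin (uniqueDiffOn_Icc zero_lt_one) le_rfl
      exact (continuous_apply l).comp_continuousOn (hdc.mono hsubI)

/-- Grid point `j/n`. -/
noncomputable def Tg (n : ℕ) (j : ℕ) : ℝ := j / n

lemma Tg_zero (n : ℕ) : Tg n 0 = 0 := by simp [Tg]

lemma Tg_n {n : ℕ} (hn : 0 < n) : Tg n n = 1 := by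
  rw [Tg, div_self]
  exact_mod_cast hn.ne'

lemma Tg_mono {n : ℕ} (hn : 0 < n) {j j' : ℕ} (h : j ≤ j') : Tg n j ≤ Tg n j' := by
  have hnR : (0:ℝ) < n := by exact_mod_cast hn
  rw [Tg, Tg]
  gcongr


lemma Tg_mem {n : ℕ} (hn : 0 < n) {j : ℕ} (h : j ≤ n) : Tg n j ∈ Icc (0:ℝ) 1 := by
  have hnR : (0:ℝ) < n := by exact_mod_cast hn
  constructor
  · rw [Tg]
    positivity
  · rw [Tg, div_le_one hnR]
    exact_mod_cast h

lemma Tg_succ_sub {n : ℕ} (hn : 0 < n) (b : ℕ) : Tg n (b+1) - Tg n b = 1 / n := by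
  have hnR : (0:ℝ) < n := by exact_mod_cast hn
  rw [Tg, Tg, div_sub_div_same]
  push_cast
  ring_nf

lemma Tg_dist {n : ℕ} (hn : 0 < n) {j j' : ℕ} (h1 : j' ≤ j + 1) (h2 : j ≤ j' + 1) :
    dist (Tg n j) (Tg n j') ≤ 1 / n := by
  have hnR : (0:ℝ) < n := by exact_mod_cast hn
  rw [Real.dist_eq, Tg, Tg, div_sub_div_same, abs_div, abs_of_pos hnR]
  gcongr
  rw [abs_le]
  have c1 : (j':ℝ) ≤ (j:ℝ) + 1 := by exact_mod_cast h1
  have c2 : (j:ℝ) ≤ (j':ℝ) + 1 := by exact_mod_cast h2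
  constructor <;> linarith

lemma pieceCont {F : Fin 3 → E3 → ℝ} {Ω : Set E3}
    (hF : ∀ l, ∀ x ∈ Ω, ContDiffAt ℝ 1 (F l) x)
    {γ : ℝ → E3} (hγ : ContDiffOn ℝ 1 γ (Icc 0 1))
    (hmemΩ : ∀ t ∈ Icc (0:ℝ) 1, γ t ∈ Ω) :
    ContinuousOn (fun t => ∑ l, F l (γ t) * derivWithin γ (Icc 0 1) t l) (Icc (0:ℝ) 1) := by
  apply continuousOn_finset_sum
  intro l _
  apply ContinuousOn.mul
  · exact fun t ht => ((hF l _ (hmemΩ t ht)).continuousAt.comp_continuousWithinAt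
      (hγ.continuousOn t ht))
  · have hdc : ContinuousOn (derivWithin γ (Icc 0 1)) (Icc (0:ℝ) 1) :=
      hγ.continuousOn_derivWithin (uniqueDiffOn_Icc zero_lt_one) le_rfl
    exact (continuous_apply l).comp_continuousOn hdc

lemma derivInt_congr {F : Fin 3 → E3 → ℝ} {γ : ℝ → E3} :
    (∫ t in (0:ℝ)..1, ∑ l, F l (γ t) * deriv γ t l)
      = ∫ t in (0:ℝ)..1, ∑ l, F l (γ t) * derivWithin γ (Icc 0 1) t l := by
  apply intervalIntegral.integral_congr_ae
  have h1 : ∀ᵐ (t : ℝ) ∂volume, t ∉ ({1} : Set ℝ) :=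
    MeasureTheory.measure_eq_zero_iff_ae_notMem.mp Real.volume_singleton
  filter_upwards [h1] with t ht1 htI
  rw [uIoc_of_le zero_le_one] at htI
  have ht : t ∈ Ioo (0:ℝ) 1 := ⟨htI.1, lt_of_le_of_ne htI.2 (by simpa using ht1)⟩
  rw [derivWithin_of_mem_nhds (Icc_mem_nhds ht.1 ht.2)]


theorem loop_integral_homotopy_invariant {F : Fin 3 → E3 → ℝ} {Ω : Set E3} (hΩ : IsOpen Ω)
    (hF : ∀ l, ∀ x ∈ Ω, ContDiffAt ℝ 1 (F l) x)
    (hcl : ∀ x ∈ Ω, ∀ l m, pd m (F l) x = pd l (F m) x)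
    {γ₀ γ₁ : ℝ → E3} (h₀ : IsC1LoopIn γ₀ Ω) (h₁ : IsC1LoopIn γ₁ Ω)
    (hh : FreelyHomotopicIn γ₀ γ₁ Ω) :
    (∫ t in (0:ℝ)..1, ∑ l, F l (γ₀ t) * deriv γ₀ t l)
      = ∫ t in (0:ℝ)..1, ∑ l, F l (γ₁ t) * deriv γ₁ t l := by
  obtain ⟨hγ₀, hγ₀mem, -⟩ := h₀
  obtain ⟨hγ₁, hγ₁mem, -⟩ := h₁
  obtain ⟨H, Hcont, Hmem, H0, H1, Hloop⟩ := hh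
  set Q : Set (ℝ × ℝ) := Icc 0 1 ×ˢ Icc 0 1 with hQ_def
  have hQc : IsCompact Q := isCompact_Icc.prod isCompact_Icc
  have hKc : IsCompact (H '' Q) := hQc.image_of_continuousOn Hcont
  have hKΩ : H '' Q ⊆ Ω := Set.image_subset_iff.mpr Hmem
  obtain ⟨ρ, hρ0, hρ⟩ := hKc.exists_thickening_subset_open hΩ hKΩ
  have hball : ∀ p ∈ Q, ball (H p) ρ ⊆ Ω := fun p hp =>
    (ball_subset_thickening (mem_image_of_mem H hp) ρ).trans hρ
  -- uniform continuity
  have hUC := hQc.uniformContinuousOn_of_continuous Hcont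
  rw [Metric.uniformContinuousOn_iff] at hUC
  obtain ⟨δ, hδ0, hδ⟩ := hUC ρ hρ0
  -- choose grid size
  obtain ⟨n0, hn0⟩ := exists_nat_one_div_lt hδ0
  set n : ℕ := n0 + 1 with hn_def
  have hn : 0 < n := n0.succ_pos
  have hstep : (1:ℝ) / n < δ := by
    have : ((n0:ℝ) + 1) = (n:ℝ) := by push_cast [hn_def]; ring
    rwa [this] at hn0
  set T : ℕ → ℝ := Tg n with hT_def
  have hTmem : ∀ {j : ℕ}, j ≤ n → T j ∈ Icc (0:ℝ) 1 := fun hj => Tg_mem hn hj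
  have hQmem : ∀ {a b : ℕ}, a ≤ n → b ≤ n → (T a, T b) ∈ Q := fun ha hb =>
    Set.mk_mem_prod (hTmem ha) (hTmem hb)
  set P : ℕ → ℕ → E3 := fun a b => H (T a, T b) with hP_def
  -- adjacent grid images are close
  have hclose : ∀ {a b a' b' : ℕ}, a ≤ n → b ≤ n → a' ≤ n → b' ≤ n →
      a' ≤ a + 1 → a ≤ a' + 1 → b' ≤ b + 1 → b ≤ b' + 1 →
      P a' b' ∈ ball (P a b) ρ := by
    intro a b a' b' ha hb ha' hb' h1 h2 h3 h4
    rw [mem_ball, hP_def]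
    apply hδ _ (hQmem ha' hb') _ (hQmem ha hb)
    have : dist ((T a', T b') : ℝ × ℝ) (T a, T b) ≤ 1 / n := by
      rw [Prod.dist_eq]
      exact max_le (Tg_dist hn h2 h1) (Tg_dist hn h4 h3)
    exact lt_of_le_of_lt this hstep
  -- potentials at grid points
  have hpots : ∀ a, a ≤ n → ∀ b, b ≤ n →
      ∃ f : E3 → ℝ, ∀ y ∈ ball (P a b) ρ, HasFDerivAt f (vf F y) y :=
    fun a ha b hb => pot hF hcl (hball _ (hQmem ha hb))
  choose f hf using hpots
  -- the horizontal rows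
  set R : ℕ → ℝ := fun a => ∑ b ∈ Finset.range n, chordInt F (P a b) (P a (b+1)) with hR_def
  -- rows are equal
  have hrow : ∀ a, a < n → R (a+1) = R a := by
    intro a ha
    have haL : a ≤ n := ha.le
    have haS : a + 1 ≤ n := ha
    have hsq : ∀ b, b < n →
        chordInt F (P a b) (P a (b+1)) - chordInt F (P (a+1) b) (P (a+1) (b+1))
          = chordInt F (P a b) (P (a+1) b) - chordInt F (P a (b+1)) (P (a+1) (b+1)) := by
      intro b hb
      have hbL : b ≤ n := hb.le
      have hbS : b + 1 ≤ n := hb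
      have hballz := hball _ (hQmem haL hbL)
      have hfp := hf a haL b hbL
      have m00 : P a b ∈ ball (P a b) ρ := mem_ball_self hρ0
      have m01 : P a (b+1) ∈ ball (P a b) ρ :=
        hclose haL hbL haL hbS (by omega) (by omega) (by omega) (by omega)
      have m10 : P (a+1) b ∈ ball (P a b) ρ :=
        hclose haL hbL haS hbL (by omega) (by omega) (by omega) (by omega)
      have m11 : P (a+1) (b+1) ∈ ball (P a b) ρ :=
        hclose haL hbL haS hbS (by omega) (by omega) (by omega) (by omega)
      rw [chordInt_eq hF hballz hfp m00 m01, chordInt_eq hF hballz hfp m10 m11,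
        chordInt_eq hF hballz hfp m00 m10, chordInt_eq hF hballz hfp m01 m11]
      ring
    have hdiff : R a - R (a+1)
        = ∑ b ∈ Finset.range n, (chordInt F (P a b) (P (a+1) b)
            - chordInt F (P a (b+1)) (P (a+1) (b+1))) := by
      rw [hR_def, ← Finset.sum_sub_distrib]
      exact Finset.sum_congr rfl fun b hb => hsq b (Finset.mem_range.mp hb)
    rw [Finset.sum_range_sub' (fun b => chordInt F (P a b) (P (a+1) b)) n] at hdiff
    have hP0n : ∀ c, c ≤ n → P c n = P c 0 := by
      intro c hc
      rw [hP_def]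
      simp only [Tg_n hn, Tg_zero, hT_def]
      exact (Hloop (T c) (hTmem hc)).symm
    rw [hP0n a haL, hP0n (a+1) haS, sub_self] at hdiff
    linarith
  have hR0n : R n = R 0 := by
    have : ∀ a, a ≤ n → R a = R 0 := by
      intro a
      induction a with
      | zero => intro _; rfl
      | succ a ih =>
        intro ha
        rw [hrow a (Nat.lt_of_succ_le ha), ih (Nat.le_of_succ_le ha)]
    exact this n le_rfl
  -- a C¹ loop tracking a fixed row equals the row sum
  have crow : ∀ (a : ℕ), a ≤ n → ∀ (γ : ℝ → E3), ContDiffOn ℝ 1 γ (Icc 0 1) →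
      (∀ t ∈ Icc (0:ℝ) 1, γ t ∈ Ω) →
      (∀ t ∈ Icc (0:ℝ) 1, γ t = H (T a, t)) →
      (∫ t in (0:ℝ)..1, ∑ l, F l (γ t) * derivWithin γ (Icc 0 1) t l) = R a := by
    intro a ha γ hγ hγΩ hγH
    have hgc := pieceCont hF hγ hγΩ
    have hint : ∀ k, k < n → IntervalIntegrable
        (fun t => ∑ l, F l (γ t) * derivWithin γ (Icc 0 1) t l) volume (T k) (T (k+1)) := by
      intro k hk
      apply ContinuousOn.intervalIntegrable
      rw [uIcc_of_le (Tg_mono hn (Nat.le_succ k))]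
      exact hgc.mono (Icc_subset_Icc (hTmem hk.le).1 (hTmem hk).2)
    have hsplit := intervalIntegral.sum_integral_adjacent_intervals hint
    rw [hT_def] at hsplit
    rw [Tg_zero, Tg_n hn] at hsplit
    rw [← hsplit, hR_def]
    apply Finset.sum_congr rfl
    intro b hbr
    have hb : b < n := Finset.mem_range.mp hbr
    have hbL : b ≤ n := hb.le
    have hbS : b + 1 ≤ n := hb
    -- each curve piece stays in the ball around P a b
    have hmemb : ∀ t ∈ Icc (T b) (T (b+1)), γ t ∈ ball (P a b) ρ := by
      intro t ht
      have ht01 : t ∈ Icc (0:ℝ) 1 :=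
        ⟨le_trans (hTmem hbL).1 ht.1, le_trans ht.2 (hTmem hbS).2⟩
      rw [hγH t ht01, hP_def, mem_ball]
      apply hδ _ (Set.mk_mem_prod (hTmem ha) ht01) _ (hQmem ha hbL)
      have hd2 : dist t (T b) ≤ 1 / n := by
        rw [Real.dist_eq, abs_of_nonneg (by linarith [ht.1])]
        have := Tg_succ_sub hn b
        rw [hT_def]
        have h2 : t - Tg n b ≤ Tg n (b+1) - Tg n b := by
          rw [hT_def] at ht
          linarith [ht.2]
        linarith
      have : dist ((T a, t) : ℝ × ℝ) (T a, T b) ≤ 1 / n := by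
        rw [Prod.dist_eq]
        simp only [dist_self]
        exact max_le (by positivity) hd2
      exact lt_of_le_of_lt this hstep
    have hγTb : γ (T b) = P a b := by rw [hγH _ (hTmem hbL), hP_def]
    have hγTb1 : γ (T (b+1)) = P a (b+1) := by rw [hγH _ (hTmem hbS), hP_def]
    rw [pieceInt_eq hF (hball _ (hQmem ha hbL)) (hf a ha b hbL)
      hγ (Tg_mono hn (Nat.le_succ b)) (hTmem hbL).1 (hTmem hbS).2 hmemb]
    rw [chordInt_eq hF (hball _ (hQmem ha hbL)) (hf a ha b hbL)
      (mem_ball_self hρ0)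
      (hclose ha hbL ha hbS (by omega) (by omega) (by omega) (by omega))]
    rw [hγTb, hγTb1]
  -- assemble
  have e0 : (∫ t in (0:ℝ)..1, ∑ l, F l (γ₀ t) * deriv γ₀ t l) = R 0 := by
    rw [derivInt_congr]
    apply crow 0 (Nat.zero_le n) γ₀ hγ₀ hγ₀mem
    intro t ht
    rw [hT_def, Tg_zero]
    exact (H0 t ht).symm
  have e1 : (∫ t in (0:ℝ)..1, ∑ l, F l (γ₁ t) * deriv γ₁ t l) = R n := by
    rw [derivInt_congr]
    apply crow n le_rfl γ₁ hγ₁ hγ₁mem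
    intro t ht
    rw [hT_def, Tg_n hn]
    exact (H1 t ht).symm
  rw [e0, e1, hR0n]


lemma pd_contDiffAt {f : E3 → ℝ} {Ω : Set E3} (hΩ : IsOpen Ω)
    (hfC : ContDiffOn ℝ 2 f Ω) {x : E3} (hx : x ∈ Ω) (j : Fin 3) :
    ContDiffAt ℝ 1 (pd j f) x := by
  have h2 : ContDiffAt ℝ 2 f x := hfC.contDiffAt (hΩ.mem_nhds hx)
  have h3 := h2.fderiv_right (m := 1) (by norm_num)
  exact h3.clm_apply contDiffAt_const

lemma Efield_contDiffAt {ε : Fin 3 → Fin 3 → E3 → ℝ} {Ω : Set E3} (hΩ : IsOpen Ω)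
    (hreg : ∀ i j, ContDiffOn ℝ 2 (ε i j) Ω) (i k l : Fin 3) {x : E3} (hx : x ∈ Ω) :
    ContDiffAt ℝ 1 (Efield ε i k l) x :=
  (pd_contDiffAt hΩ (hreg i l) hx k).sub (pd_contDiffAt hΩ (hreg k l) hx i)

lemma pd_sub {f g : E3 → ℝ} {x : E3} (hf : DifferentiableAt ℝ f x)
    (hg : DifferentiableAt ℝ g x) (j : Fin 3) :
    pd j (fun y => f y - g y) x = pd j f x - pd j g x := by
  rw [pd, fderiv_fun_sub hf hg]
  rfl

lemma Efield_closed {ε : Fin 3 → Fin 3 → E3 → ℝ} {Ω : Set E3} (hΩ : IsOpen Ω)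
    (hreg : ∀ i j, ContDiffOn ℝ 2 (ε i j) Ω) (hSV : StVenant ε Ω) (i k : Fin 3)
    {x : E3} (hx : x ∈ Ω) (l m : Fin 3) :
    pd m (Efield ε i k l) x = pd l (Efield ε i k m) x := by
  have h1 : pd m (Efield ε i k l) x = pd m (pd k (ε i l)) x - pd m (pd i (ε k l)) x :=
    pd_sub ((pd_contDiffAt hΩ (hreg i l) hx k).differentiableAt one_ne_zero)
      ((pd_contDiffAt hΩ (hreg k l) hx i).differentiableAt one_ne_zero) m
  have h2 : pd l (Efield ε i k m) x = pd l (pd k (ε i m)) x - pd l (pd i (ε k m)) x :=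
    pd_sub ((pd_contDiffAt hΩ (hreg i m) hx k).differentiableAt one_ne_zero)
      ((pd_contDiffAt hΩ (hreg k m) hx i).differentiableAt one_ne_zero) l
  have h3 := hSV x hx i k l m
  rw [h1, h2]
  linarith

/-- For a C² symmetric matrix field `ε` on an open set `Ω ⊆ ℝ³` satisfying St.-Venant
compatibility, with `E_{ikl} := ε_{il,k} − ε_{kl,i}`: the loop integral
`∫₀¹ Σ_l E_{ikl}(γ(t)) γ'_l(t) dt` is the same for freely homotopic C¹ loops, and for
any C¹ loop the resulting matrix `ω` is skew-symmetric. -/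
theorem weingarten_stmt5 (Ω : Set E3) (hΩ : IsOpen Ω)
    (ε : Fin 3 → Fin 3 → E3 → ℝ)
    (hreg : ∀ i j, ContDiffOn ℝ 2 (ε i j) Ω)
    (hsym : ∀ i j, ∀ x ∈ Ω, ε i j x = ε j i x)
    (hSV : StVenant ε Ω) :
    (∀ γ₀ γ₁ : ℝ → E3, IsC1LoopIn γ₀ Ω → IsC1LoopIn γ₁ Ω →
      FreelyHomotopicIn γ₀ γ₁ Ω →
      ∀ i k : Fin 3,
        (∫ t in (0:ℝ)..1, ∑ l, Efield ε i k l (γ₀ t) * deriv γ₀ t l) =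
        (∫ t in (0:ℝ)..1, ∑ l, Efield ε i k l (γ₁ t) * deriv γ₁ t l)) ∧
    (∀ γ : ℝ → E3, IsC1LoopIn γ Ω →
      ∀ i k : Fin 3,
        (∫ t in (0:ℝ)..1, ∑ l, Efield ε i k l (γ t) * deriv γ t l) =
        -(∫ t in (0:ℝ)..1, ∑ l, Efield ε k i l (γ t) * deriv γ t l)) := by
  constructor
  · intro γ₀ γ₁ h₀ h₁ hh i k
    exact loop_integral_homotopy_invariant hΩ
      (fun l x hx => Efield_contDiffAt hΩ hreg i k l hx)
      (fun x hx l m => Efield_closed hΩ hreg hSV i k hx l m) h₀ h₁ hh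
  · intro γ hγ i k
    have hpt : ∀ t, (∑ l, Efield ε i k l (γ t) * deriv γ t l)
        = -(∑ l, Efield ε k i l (γ t) * deriv γ t l) := by
      intro t
      rw [← Finset.sum_neg_distrib]
      apply Finset.sum_congr rfl
      intro l _
      simp only [Efield]
      ring
    rw [intervalIntegral.integral_congr (fun t _ => hpt t), intervalIntegral.integral_neg]
end
end

section
/- Let Ω ⊆ ℝ³ be a connected open set, let ε be a twice continuously differentiable symmetric 3×3 matrix field on Ω satisfying the St.-Venant compatibility condition, and set E_{ikl} := ε_{il,k} − ε_{kl,i}. Suppose ω₁ and ω₂ are continuously differentiable skew-symmetric matrix fields on Ω, each satisfying ∂_l (ω_a)_{ik} = E_{ikl} on Ω (a = 1,2). Then for any two C¹ loops γ₀, γ₁ that are freely homotopic in Ω and for each i ∈ {1,2,3}: ∫₀¹ Σ_k (ε_{ik} + (ω₁)_{ik})(γ₀(t)) (γ₀)'_k(t) dt = ∫₀¹ Σ_k (ε_{ik} + (ω₂)_{ik})(γ₁(t)) (γ₁)'_k(t) dt. (In particular, the Burgers vector of a dislocation is well defined, independent of the choice of rotation field and of the loop within its free homotopy class.) -/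
noncomputable section

open Matrix

section WgAux

open Metric Set MeasureTheory intervalIntegral

set_option maxHeartbeats 1000000

/-- A function with vanishing derivative on an open set is constant on
preconnected subsets. -/
lemma wg_const_on {F : E3 → ℝ} {W : Set E3} (hW : IsOpen W)
    (hF : ∀ x ∈ W, HasFDerivAt F (0 : E3 →L[ℝ] ℝ) x) {S : Set E3}
    (hS : IsPreconnected S) (hSW : S ⊆ W) {x y : E3} (hx : x ∈ S) (hy : y ∈ S) :
    F x = F y := by
  -- local constancy
  have hloc : ∀ z ∈ W, ∃ r > 0, ball z r ⊆ W ∧ ∀ w ∈ ball z r, F w = F z := by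
    intro z hz
    obtain ⟨r, hr, hrW⟩ := Metric.isOpen_iff.1 hW z hz
    refine ⟨r, hr, hrW, fun w hw => ?_⟩
    have := Convex.norm_image_sub_le_of_norm_hasFDerivWithin_le
      (f := F) (f' := fun _ => (0 : E3 →L[ℝ] ℝ)) (s := ball z r) (C := 0)
      (fun u hu => (hF u (hrW hu)).hasFDerivWithinAt)
      (fun u _ => by simp) (convex_ball z r) (mem_ball_self hr) hw
    exact sub_eq_zero.mp (by simpa using this)
  set U : Set E3 := {z | z ∈ W ∧ F z = F x} with hU
  set V : Set E3 := {z | z ∈ W ∧ F z ≠ F x} with hV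
  have hUopen : IsOpen U := by
    rw [Metric.isOpen_iff]
    rintro z ⟨hzW, hzF⟩
    obtain ⟨r, hr, hrW, hconst⟩ := hloc z hzW
    exact ⟨r, hr, fun w hw => ⟨hrW hw, by rw [hconst w hw, hzF]⟩⟩
  have hVopen : IsOpen V := by
    rw [Metric.isOpen_iff]
    rintro z ⟨hzW, hzF⟩
    obtain ⟨r, hr, hrW, hconst⟩ := hloc z hzW
    exact ⟨r, hr, fun w hw => ⟨hrW hw, by rw [hconst w hw]; exact hzF⟩⟩
  have hdisj : Disjoint U V := by
    rw [Set.disjoint_left]; rintro z ⟨_, h1⟩ ⟨_, h2⟩; exact h2 h1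
  have hsub : S ⊆ U ∪ V := by
    intro z hz
    by_cases h : F z = F x
    · exact Or.inl ⟨hSW hz, h⟩
    · exact Or.inr ⟨hSW hz, h⟩
  have := hS.subset_left_of_subset_union hUopen hVopen hdisj hsub
    ⟨x, hx, hSW hx, rfl⟩
  exact ((this hy).2).symm

lemma wg_fderiv_apply {F : E3 → ℝ} {x : E3} (v : E3) :
    fderiv ℝ F x v = ∑ l, v l * pd l F x := by
  have hv : v = ∑ l : Fin 3, v l • (Pi.single l (1:ℝ) : E3) := by
    funext j
    simp [Pi.single_apply, Finset.sum_apply, eq_comm]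
  conv_lhs => rw [hv]
  rw [map_sum]
  simp [pd, smul_eq_mul]

lemma wg_primitive {Ω : Set E3} (hΩ : IsOpen Ω) {f : E3 → (E3 →L[ℝ] ℝ)}
    (hf : ContDiffOn ℝ 1 f Ω)
    (hsym : ∀ x ∈ Ω, ∀ u v : E3, fderiv ℝ f x u v = fderiv ℝ f x v u)
    {c : E3} {r : ℝ} (hball : ball c r ⊆ Ω) :
    ∃ g : E3 → ℝ, ∀ x ∈ ball c r, HasFDerivAt g (f x) x := by
  classical
  set f' : E3 → E3 →L[ℝ] (E3 →L[ℝ] ℝ) := fderiv ℝ f with hf'def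
  have hf'cont : ContinuousOn f' Ω := hf.continuousOn_fderiv_of_isOpen hΩ le_rfl
  have hfderiv : ∀ y ∈ Ω, HasFDerivAt f (f' y) y := fun y hy =>
    ((hf.contDiffAt (hΩ.mem_nhds hy)).differentiableAt one_ne_zero).hasFDerivAt
  set F : E3 → ℝ → ℝ := fun x u => f (c + u • (x - c)) (x - c) with hFdef
  refine ⟨fun x => ∫ u in (0:ℝ)..1, F x u, ?_⟩
  intro x₀ hx₀
  have hd : dist x₀ c < r := mem_ball.1 hx₀
  set ε : ℝ := (r - dist x₀ c) / 2 with hεdef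
  have hε : 0 < ε := by rw [hεdef]; linarith
  set r' : ℝ := dist x₀ c + ε with hr'def
  have hr' : r' < r := by rw [hr'def, hεdef]; linarith
  have hr'0 : 0 ≤ r' := by rw [hr'def]; positivity
  have hKΩ : closedBall c r' ⊆ Ω := (closedBall_subset_ball hr').trans hball
  -- points along segments stay in the compact ball
  have hseg : ∀ x ∈ ball x₀ ε, ∀ u ∈ Icc (0:ℝ) 1, c + u • (x - c) ∈ closedBall c r' := by
    intro x hx u hu
    have hxc : ‖x - c‖ ≤ r' := by
      have h1 : dist x c ≤ dist x x₀ + dist x₀ c := dist_triangle x x₀ c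
      have h2 : dist x x₀ ≤ ε := le_of_lt (mem_ball.1 hx)
      rw [← dist_eq_norm]; rw [hr'def]; linarith
    have : dist (c + u • (x - c)) c = ‖u • (x - c)‖ := by
      rw [dist_eq_norm]; congr 1; abel
    rw [mem_closedBall, this, norm_smul]
    calc ‖u‖ * ‖x - c‖ ≤ 1 * r' := by
          apply mul_le_mul _ hxc (norm_nonneg _) zero_le_one
          rw [Real.norm_eq_abs, abs_of_nonneg hu.1]; exact hu.2
      _ = r' := one_mul r'
  have hx₀c : ‖x₀ - c‖ ≤ r' := by
    rw [← dist_eq_norm, hr'def]; linarith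
  -- bounds on f and f' on the compact ball
  obtain ⟨M0, hM0⟩ := (isCompact_closedBall c r').exists_bound_of_continuousOn
    (f := f) (hf.continuousOn.mono hKΩ)
  obtain ⟨L0, hL0⟩ := (isCompact_closedBall c r').exists_bound_of_continuousOn
    (f := f') (hf'cont.mono hKΩ)
  set M : ℝ := max M0 0
  set L : ℝ := max L0 0
  have hM : ∀ y ∈ closedBall c r', ‖f y‖ ≤ M := fun y hy => (hM0 y hy).trans (le_max_left _ _)
  have hL : ∀ y ∈ closedBall c r', ‖f' y‖ ≤ L := fun y hy => (hL0 y hy).trans (le_max_left _ _)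
  have hM0' : 0 ≤ M := le_max_right _ _
  have hL0' : 0 ≤ L := le_max_right _ _
  set C : ℝ := M + L * r' with hCdef
  have hC0 : 0 ≤ C := by positivity
  -- the derivative in x of F x u
  set D : ℝ → E3 → (E3 →L[ℝ] ℝ) :=
    fun u x => f (c + u • (x - c)) + u • ((f' (c + u • (x - c))).flip (x - c)) with hDdef
  have key : ∀ u ∈ Icc (0:ℝ) 1, ∀ x ∈ ball x₀ ε, HasFDerivAt (fun z => F z u) (D u x) x := by
    intro u hu x hx
    have hyΩ : c + u • (x - c) ∈ Ω := hKΩ (hseg x hx u hu)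
    have h1 : HasFDerivAt (fun z : E3 => c + u • (z - c))
        (u • ContinuousLinearMap.id ℝ E3) x :=
      (((hasFDerivAt_id x).sub_const c).const_smul u).const_add c
    have h2 := (hfderiv _ hyΩ).comp x h1
    have h3 : HasFDerivAt (fun z : E3 => z - c) (ContinuousLinearMap.id ℝ E3) x :=
      (hasFDerivAt_id x).sub_const c
    have h4 := h2.clm_apply h3
    refine h4.congr_fderiv (Eq.symm ?_)
    ext v
    simp only [D, ContinuousLinearMap.add_apply, ContinuousLinearMap.coe_comp',
      Function.comp_apply, ContinuousLinearMap.flip_apply, ContinuousLinearMap.smul_apply,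
      ContinuousLinearMap.id_apply, _root_.map_smul, smul_eq_mul]
  have hDnorm : ∀ u ∈ Icc (0:ℝ) 1, ∀ x ∈ ball x₀ ε, ‖D u x‖ ≤ C := by
    intro u hu x hx
    have hy : c + u • (x - c) ∈ closedBall c r' := hseg x hx u hu
    have hxc : ‖x - c‖ ≤ r' := by
      have h1 : dist x c ≤ dist x x₀ + dist x₀ c := dist_triangle x x₀ c
      have h2 : dist x x₀ ≤ ε := le_of_lt (mem_ball.1 hx)
      rw [← dist_eq_norm, hr'def]; linarith
    have hv : ∀ v : E3, ‖(D u x) v‖ ≤ C * ‖v‖ := by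
      intro v
      have e1 : (D u x) v = f (c + u • (x - c)) v + u * (f' (c + u • (x - c)) v) (x - c) := by
        simp [D, ContinuousLinearMap.flip_apply, smul_eq_mul]
      have b1 : ‖f (c + u • (x - c)) v‖ ≤ M * ‖v‖ :=
        le_trans (ContinuousLinearMap.le_opNorm _ _)
          (mul_le_mul_of_nonneg_right (hM _ hy) (norm_nonneg _))
      have b2 : ‖(f' (c + u • (x - c)) v) (x - c)‖ ≤ ‖f' (c + u • (x - c)) v‖ * ‖x - c‖ :=
        ContinuousLinearMap.le_opNorm _ _
      have b3 : ‖f' (c + u • (x - c)) v‖ ≤ L * ‖v‖ :=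
        le_trans (ContinuousLinearMap.le_opNorm _ _)
          (mul_le_mul_of_nonneg_right (hL _ hy) (norm_nonneg _))
      have hu1 : |u| ≤ 1 := by rw [abs_of_nonneg hu.1]; exact hu.2
      have hvn : (0:ℝ) ≤ ‖v‖ := norm_nonneg _
      have hxcn : (0:ℝ) ≤ ‖x - c‖ := norm_nonneg _
      rw [e1]
      calc ‖f (c + u • (x - c)) v + u * (f' (c + u • (x - c)) v) (x - c)‖
          ≤ ‖f (c + u • (x - c)) v‖ + ‖u‖ * ‖(f' (c + u • (x - c)) v) (x - c)‖ := by
            rw [← norm_mul]; exact norm_add_le _ _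
        _ ≤ M * ‖v‖ + 1 * (L * ‖v‖ * r') := by
            apply add_le_add b1
            apply mul_le_mul (by rwa [Real.norm_eq_abs]) _ (norm_nonneg _) zero_le_one
            calc ‖(f' (c + u • (x - c)) v) (x - c)‖
                ≤ ‖f' (c + u • (x - c)) v‖ * ‖x - c‖ := b2
              _ ≤ L * ‖v‖ * r' := by
                  apply mul_le_mul b3 hxc hxcn (by positivity)
        _ = C * ‖v‖ := by rw [hCdef]; ring
    exact ContinuousLinearMap.opNorm_le_bound _ hC0 hv
  -- continuity of u ↦ D u x for fixed x in the ball
  have hDcont : ∀ x ∈ ball x₀ ε, ContinuousOn (fun u => D u x) (Icc (0:ℝ) 1) := by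
    intro x hx
    have hy : ContinuousOn (fun u : ℝ => c + u • (x - c)) (Icc (0:ℝ) 1) := by fun_prop
    have hmaps : MapsTo (fun u : ℝ => c + u • (x - c)) (Icc 0 1) Ω :=
      fun u hu => hKΩ (hseg x hx u hu)
    have hc1 : ContinuousOn (fun u : ℝ => f (c + u • (x - c))) (Icc 0 1) :=
      hf.continuousOn.comp hy hmaps
    have hc2 : ContinuousOn (fun u : ℝ => f' (c + u • (x - c))) (Icc 0 1) :=
      hf'cont.comp hy hmaps
    have hc3 : ContinuousOn (fun u : ℝ => (f' (c + u • (x - c))).flip) (Icc 0 1) :=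
      (ContinuousLinearMap.flipₗᵢ ℝ E3 E3 ℝ).continuous.comp_continuousOn hc2
    have hc4 : ContinuousOn (fun u : ℝ => (f' (c + u • (x - c))).flip (x - c)) (Icc 0 1) :=
      hc3.clm_apply continuousOn_const
    exact hc1.add (continuousOn_id.smul hc4)
  -- continuity of u ↦ F x u for fixed x in the ball
  have hFcont : ∀ x ∈ ball x₀ ε, ContinuousOn (fun u => F x u) (Icc (0:ℝ) 1) := by
    intro x hx
    have hy : ContinuousOn (fun u : ℝ => c + u • (x - c)) (Icc (0:ℝ) 1) := by fun_prop
    have hmaps : MapsTo (fun u : ℝ => c + u • (x - c)) (Icc 0 1) Ω :=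
      fun u hu => hKΩ (hseg x hx u hu)
    exact (hf.continuousOn.comp hy hmaps).clm_apply continuousOn_const
  have hIoc : uIoc (0:ℝ) 1 = Ioc (0:ℝ) 1 := uIoc_of_le zero_le_one
  have hIocIcc : Ioc (0:ℝ) 1 ⊆ Icc 0 1 := Ioc_subset_Icc_self
  -- apply the dominated parametric differentiation theorem
  have main := hasFDerivAt_integral_of_dominated_loc_of_lip_interval
    (F := F) (F' := fun u => D u x₀) (x₀ := x₀) (a := 0) (b := 1)
    (bound := fun _ => C) (μ := volume) (ball_mem_nhds x₀ hε)
    ?_ ?_ ?_ ?_ ?_ ?_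
  · obtain ⟨hFint, hderiv⟩ := main
    have : (∫ u in (0:ℝ)..1, D u x₀) = f x₀ := by
      ext v
      rw [ContinuousLinearMap.intervalIntegral_apply hFint v]
      have happ : ∀ u ∈ uIcc (0:ℝ) 1,
          HasDerivAt (fun w : ℝ => w * f (c + w • (x₀ - c)) v) ((D u x₀) v) u := by
        intro u hu
        rw [uIcc_of_le zero_le_one] at hu
        have hyΩ : c + u • (x₀ - c) ∈ Ω := hKΩ (hseg x₀ (mem_ball_self hε) u hu)
        have hinner : HasDerivAt (fun w : ℝ => c + w • (x₀ - c)) (x₀ - c) u := by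
          simpa using ((hasDerivAt_id u).smul_const (x₀ - c)).const_add c
        have hcomp : HasDerivAt (fun w : ℝ => f (c + w • (x₀ - c)) v)
            ((f' (c + u • (x₀ - c)) (x₀ - c)) v) u := by
          have h5 := ((hfderiv _ hyΩ).clm_apply (hasFDerivAt_const v _)).comp_hasDerivAt u hinner
          refine h5.congr_deriv ?_
          simp
        have h6 := (hasDerivAt_id u).mul hcomp
        have h7 : (D u x₀) v = 1 * f (c + u • (x₀ - c)) v
            + u * (f' (c + u • (x₀ - c)) (x₀ - c)) v := by
          have e : (D u x₀) v = f (c + u • (x₀ - c)) v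
              + u * (f' (c + u • (x₀ - c)) v) (x₀ - c) := by
            simp [D, ContinuousLinearMap.flip_apply, smul_eq_mul]
          rw [e, hsym _ hyΩ v (x₀ - c)]; ring
        rw [h7]
        exact h6
      have hint2 : IntervalIntegrable (fun u => (D u x₀) v) volume 0 1 := by
        apply ContinuousOn.intervalIntegrable
        rw [uIcc_of_le zero_le_one]
        exact (hDcont x₀ (mem_ball_self hε)).clm_apply continuousOn_const
      rw [intervalIntegral.integral_eq_sub_of_hasDerivAt happ hint2]
      simp
    rw [this] at hderiv
    exact hderiv
  · -- a.e. strong measurability of F x near x₀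
    filter_upwards [ball_mem_nhds x₀ hε] with x hx
    exact ((hFcont x hx).mono (by rw [hIoc]; exact hIocIcc)).aestronglyMeasurable
      (by rw [hIoc]; exact measurableSet_Ioc)
  · -- integrability of F x₀
    apply ContinuousOn.intervalIntegrable
    rw [uIcc_of_le zero_le_one]
    exact hFcont x₀ (mem_ball_self hε)
  · -- measurability of F'
    exact ((hDcont x₀ (mem_ball_self hε)).mono (by rw [hIoc]; exact hIocIcc)).aestronglyMeasurable
      (by rw [hIoc]; exact measurableSet_Ioc)
  · -- Lipschitz bound
    refine (MeasureTheory.ae_restrict_iff' measurableSet_uIoc).2 ?_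
    apply MeasureTheory.ae_of_all
    intro u hu
    rw [hIoc] at hu
    have hu' : u ∈ Icc (0:ℝ) 1 := hIocIcc hu
    apply Convex.lipschitzOnWith_of_nnnorm_hasFDerivWithin_le (f' := fun x => D u x)
      (fun x hx => (key u hu' x hx).hasFDerivWithinAt) ?_ (convex_ball x₀ ε)
    intro x hx
    rw [← NNReal.coe_le_coe, coe_nnnorm, Real.coe_nnabs, abs_of_nonneg hC0]
    exact hDnorm u hu' x hx
  · exact intervalIntegrable_const
  · -- differentiability at x₀
    refine (MeasureTheory.ae_restrict_iff' measurableSet_uIoc).2 ?_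
    apply MeasureTheory.ae_of_all
    intro u hu
    rw [hIoc] at hu
    exact key u (hIocIcc hu) x₀ (mem_ball_self hε)

lemma wg_loop_integral {Ω : Set E3} {f : E3 → (E3 →L[ℝ] ℝ)}
    (hfc : ContinuousOn f Ω)
    {γ : ℝ → E3} (hγ : ContDiffOn ℝ 1 γ (Icc 0 1)) (hγΩ : ∀ t ∈ Icc (0:ℝ) 1, γ t ∈ Ω)
    {N : ℕ} (hN : 0 < N) {g : ℕ → E3 → ℝ} {B : ℕ → Set E3}
    (hB : ∀ k < N, γ '' Icc ((k:ℝ)/N) (((k:ℝ)+1)/N) ⊆ B k)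
    (hg : ∀ k < N, ∀ y ∈ B k, HasFDerivAt (g k) (f y) y) :
    ∫ t in (0:ℝ)..1, f (γ t) (deriv γ t)
      = ∑ k ∈ Finset.range N, (g k (γ (((k:ℝ)+1)/N)) - g k (γ ((k:ℝ)/N))) := by
  have hNR : (0:ℝ) < N := Nat.cast_pos.2 hN
  set a : ℕ → ℝ := fun k => (k:ℝ)/N with hadef
  have ha : ∀ k : ℕ, a (k+1) = ((k:ℝ)+1)/N := by intro k; rw [hadef]; push_cast; ring
  have hmono : ∀ k : ℕ, a k ≤ a (k+1) := by
    intro k; rw [ha, hadef]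
    exact (div_le_div_iff_of_pos_right hNR).2 (by linarith)
  have hmem : ∀ k ≤ N, a k ∈ Icc (0:ℝ) 1 := by
    intro k hk
    constructor
    · rw [hadef]; positivity
    · rw [hadef, div_le_one hNR]; exact_mod_cast hk
  have hIccsub : ∀ k < N, Icc (a k) (a (k+1)) ⊆ Icc (0:ℝ) 1 := by
    intro k hk
    exact Icc_subset_Icc (hmem k (le_of_lt hk)).1 (hmem (k+1) hk).2
  set G : ℝ → ℝ := fun t => f (γ t) (derivWithin γ (Icc 0 1) t) with hGdef
  have hGcont : ContinuousOn G (Icc (0:ℝ) 1) :=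
    (hfc.comp hγ.continuousOn hγΩ).clm_apply
      (hγ.continuousOn_derivWithin (uniqueDiffOn_Icc zero_lt_one) le_rfl)
  have hinterior : ∀ t ∈ Ioo (0:ℝ) 1,
      HasDerivAt γ (deriv γ t) t ∧ derivWithin γ (Icc 0 1) t = deriv γ t := by
    intro t ht
    have hmemn : Icc (0:ℝ) 1 ∈ nhds t := Icc_mem_nhds ht.1 ht.2
    have hd : DifferentiableAt ℝ γ t := (hγ.contDiffAt hmemn).differentiableAt one_ne_zero
    exact ⟨hd.hasDerivAt, derivWithin_of_mem_nhds hmemn⟩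
  have hpiece : ∀ k < N, ∫ t in a k..a (k+1), G t = g k (γ (a (k+1))) - g k (γ (a k)) := by
    intro k hk
    have hsub := hIccsub k hk
    have hmaps : MapsTo γ (Icc (a k) (a (k+1))) (B k) := by
      have himg := hB k hk
      rw [← ha k] at himg
      exact mapsTo_iff_image_subset.2 himg
    apply integral_eq_sub_of_hasDeriv_right_of_le (f := fun t => g k (γ t)) (f' := G) (hmono k)
    · exact ContinuousOn.comp
        (fun y hy => ((hg k hk y hy).continuousAt).continuousWithinAt)
        (hγ.continuousOn.mono hsub) hmaps
    · intro t ht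
      have ht01 : t ∈ Ioo (0:ℝ) 1 := by
        constructor
        · exact lt_of_le_of_lt (hmem k (le_of_lt hk)).1 ht.1
        · exact lt_of_lt_of_le ht.2 (hmem (k+1) hk).2
      obtain ⟨hdγ, hdw⟩ := hinterior t ht01
      have hγtB : γ t ∈ B k := hmaps (Ioo_subset_Icc_self ht)
      have := (hg k hk _ hγtB).comp_hasDerivAt t hdγ
      have hGt : G t = f (γ t) (deriv γ t) := by rw [hGdef]; simp [hdw]
      rw [hGt]
      exact this.hasDerivWithinAt
    · apply ContinuousOn.intervalIntegrable
      rw [uIcc_of_le (hmono k)]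
      exact hGcont.mono hsub
  have hint : ∀ k < N, IntervalIntegrable G volume (a k) (a (k+1)) := by
    intro k hk
    apply ContinuousOn.intervalIntegrable
    rw [uIcc_of_le (hmono k)]
    exact hGcont.mono (hIccsub k hk)
  have ha0 : a 0 = 0 := by rw [hadef]; simp
  have haN : a N = 1 := by rw [hadef]; field_simp
  have h1 : ∀ᵐ (t:ℝ), t ≠ (1:ℝ) := by
    rw [MeasureTheory.ae_iff]
    convert Real.volume_singleton (a := 1) using 2
    ext t; simp
  calc ∫ t in (0:ℝ)..1, f (γ t) (deriv γ t) = ∫ t in (0:ℝ)..1, G t := by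
        apply intervalIntegral.integral_congr_ae
        filter_upwards [h1] with t ht htI
        rw [uIoc_of_le zero_le_one] at htI
        have ht01 : t ∈ Ioo (0:ℝ) 1 := ⟨htI.1, lt_of_le_of_ne htI.2 ht⟩
        rw [hGdef]; simp [(hinterior t ht01).2]
    _ = ∫ t in (a 0)..(a N), G t := by rw [ha0, haN]
    _ = ∑ k ∈ Finset.range N, ∫ t in (a k)..(a (k+1)), G t :=
        (sum_integral_adjacent_intervals hint).symm
    _ = ∑ k ∈ Finset.range N, (g k (γ (((k:ℝ)+1)/N)) - g k (γ ((k:ℝ)/N))) := by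
        apply Finset.sum_congr rfl
        intro k hk
        rw [hpiece k (Finset.mem_range.1 hk), ha, hadef]


lemma wg_diff_const {f : E3 → (E3 →L[ℝ] ℝ)} {g g' : E3 → ℝ} {B B' : Set E3}
    (hB : IsOpen B) (hB' : IsOpen B')
    (hg : ∀ y ∈ B, HasFDerivAt g (f y) y) (hg' : ∀ y ∈ B', HasFDerivAt g' (f y) y)
    {S : Set E3} (hS : IsPreconnected S) (hSB : S ⊆ B) (hSB' : S ⊆ B')
    {x y : E3} (hx : x ∈ S) (hy : y ∈ S) :
    g x - g' x = g y - g' y := by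
  apply wg_const_on (W := B ∩ B') (hB.inter hB') ?_ hS
    (Set.subset_inter hSB hSB') hx hy
  intro z hz
  have := (hg z hz.1).sub (hg' z hz.2)
  rw [sub_self] at this; exact this

lemma wg_homotopy {Ω : Set E3} (hΩ : IsOpen Ω) {f : E3 → (E3 →L[ℝ] ℝ)}
    (hf : ContDiffOn ℝ 1 f Ω)
    (hsymm : ∀ x ∈ Ω, ∀ u v : E3, fderiv ℝ f x u v = fderiv ℝ f x v u)
    {γ₀ γ₁ : ℝ → E3} (h₀ : IsC1LoopIn γ₀ Ω) (h₁ : IsC1LoopIn γ₁ Ω)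
    (hhom : FreelyHomotopicIn γ₀ γ₁ Ω) :
    ∫ t in (0:ℝ)..1, f (γ₀ t) (deriv γ₀ t) = ∫ t in (0:ℝ)..1, f (γ₁ t) (deriv γ₁ t) := by
  classical
  obtain ⟨H, Hcont, HΩ, H0, H1, Hper⟩ := hhom
  set Q : Set (ℝ × ℝ) := Icc (0:ℝ) 1 ×ˢ Icc (0:ℝ) 1 with hQdef
  have hQcomp : IsCompact Q := isCompact_Icc.prod isCompact_Icc
  set K : Set E3 := H '' Q with hKdef
  have hKcomp : IsCompact K := hQcomp.image_of_continuousOn Hcont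
  have hKΩ : K ⊆ Ω := by
    rintro z ⟨p, hp, rfl⟩; exact HΩ p hp
  obtain ⟨δ, hδpos, hδ⟩ := hKcomp.exists_thickening_subset_open hΩ hKΩ
  have hballΩ : ∀ z ∈ K, ball z δ ⊆ Ω :=
    fun z hz => (ball_subset_thickening hz δ).trans hδ
  have huc := hQcomp.uniformContinuousOn_of_continuous Hcont
  rw [Metric.uniformContinuousOn_iff] at huc
  obtain ⟨η, hη, hucη⟩ := huc δ hδpos
  obtain ⟨n, hn⟩ := exists_nat_one_div_lt hη
  set N : ℕ := n + 1 with hNdef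
  have hN : 0 < N := Nat.succ_pos n
  have hNR : (0:ℝ) < N := Nat.cast_pos.2 hN
  have hNn : ((N:ℝ)) = (n:ℝ) + 1 := by rw [hNdef]; push_cast; ring
  set a : ℕ → ℝ := fun k => (k:ℝ)/N with hadef
  have ha : ∀ k : ℕ, a (k+1) = ((k:ℝ)+1)/N := by intro k; rw [hadef]; push_cast; ring
  have hmono : ∀ k : ℕ, a k ≤ a (k+1) := by
    intro k; rw [ha, hadef]
    exact (div_le_div_iff_of_pos_right hNR).2 (by linarith)
  have hstep : ∀ k : ℕ, a (k+1) - a k = 1/N := by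
    intro k; rw [ha, hadef]; ring
  have hmem : ∀ k ≤ N, a k ∈ Icc (0:ℝ) 1 := by
    intro k hk
    constructor
    · rw [hadef]; positivity
    · rw [hadef, div_le_one hNR]; exact_mod_cast hk
  have ha0 : a 0 = 0 := by rw [hadef]; simp
  have haN : a N = 1 := by rw [hadef]; field_simp
  have hIccsub : ∀ k < N, Icc (a k) (a (k+1)) ⊆ Icc (0:ℝ) 1 := by
    intro k hk
    exact Icc_subset_Icc (hmem k (le_of_lt hk)).1 (hmem (k+1) hk).2
  -- the subsquares and their images
  set sq : ℕ → ℕ → Set (ℝ × ℝ) := fun j k => Icc (a j) (a (j+1)) ×ˢ Icc (a k) (a (k+1))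
    with hsqdef
  have hsqQ : ∀ j < N, ∀ k < N, sq j k ⊆ Q := by
    intro j hj k hk
    exact Set.prod_mono (hIccsub j hj) (hIccsub k hk)
  have hcornerQ : ∀ j ≤ N, ∀ k ≤ N, (a j, a k) ∈ Q := by
    intro j hj k hk
    exact ⟨hmem j hj, hmem k hk⟩
  set B : ℕ → ℕ → Set E3 := fun j k => ball (H (a j, a k)) δ with hBdef
  have hBΩ : ∀ j < N, ∀ k < N, B j k ⊆ Ω := by
    intro j hj k hk
    exact hballΩ _ (mem_image_of_mem H (hcornerQ j (le_of_lt hj) k (le_of_lt hk)))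
  have hsq : ∀ j < N, ∀ k < N, H '' sq j k ⊆ B j k := by
    intro j hj k hk
    rintro z ⟨p, hp, rfl⟩
    have hpQ : p ∈ Q := hsqQ j hj k hk hp
    apply mem_ball.2
    rw [dist_comm]
    apply hucη _ (hcornerQ j (le_of_lt hj) k (le_of_lt hk)) _ hpQ
    have h1 : dist (a j) p.1 ≤ 1/N := by
      rw [Real.dist_eq, abs_sub_comm, abs_of_nonneg (by linarith [hp.1.1])]
      linarith [hp.1.2, hstep j]
    have h2 : dist (a k) p.2 ≤ 1/N := by
      rw [Real.dist_eq, abs_sub_comm, abs_of_nonneg (by linarith [hp.2.1])]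
      linarith [hp.2.2, hstep k]
    have hd : dist (a j, a k) p ≤ 1/N := by
      rw [Prod.dist_eq]
      exact max_le h1 h2
    calc dist (a j, a k) p ≤ 1/N := hd
      _ = 1/((n:ℝ)+1) := by rw [hNn]
      _ < η := hn
  -- choose primitives on each ball
  have hprim : ∀ j k : ℕ, j < N → k < N →
      ∃ g : E3 → ℝ, ∀ y ∈ B j k, HasFDerivAt g (f y) y := by
    intro j k hj hk
    exact wg_primitive hΩ hf hsymm (hBΩ j hj k hk)
  choose! g hg using hprim
  -- edges
  have hvert : ∀ j < N, ∀ m ≤ N, IsPreconnected (H '' (Icc (a j) (a (j+1)) ×ˢ {a m}))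
      ∧ H (a j, a m) ∈ H '' (Icc (a j) (a (j+1)) ×ˢ {a m})
      ∧ H (a (j+1), a m) ∈ H '' (Icc (a j) (a (j+1)) ×ˢ {a m}) := by
    intro j hj m hm
    have hsubQ : Icc (a j) (a (j+1)) ×ˢ ({a m} : Set ℝ) ⊆ Q := by
      apply Set.prod_mono (hIccsub j hj)
      rw [Set.singleton_subset_iff]
      exact hmem m hm
    refine ⟨(isPreconnected_Icc.prod isPreconnected_singleton).image H (Hcont.mono hsubQ),
      mem_image_of_mem H ⟨left_mem_Icc.2 (hmono j), rfl⟩,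
      mem_image_of_mem H ⟨right_mem_Icc.2 (hmono j), rfl⟩⟩
  have hhoriz : ∀ m ≤ N, ∀ k < N, IsPreconnected (H '' ({a m} ×ˢ Icc (a k) (a (k+1))))
      ∧ H (a m, a k) ∈ H '' ({a m} ×ˢ Icc (a k) (a (k+1)))
      ∧ H (a m, a (k+1)) ∈ H '' ({a m} ×ˢ Icc (a k) (a (k+1))) := by
    intro m hm k hk
    have hsubQ : ({a m} : Set ℝ) ×ˢ Icc (a k) (a (k+1)) ⊆ Q := by
      apply Set.prod_mono _ (hIccsub k hk)
      rw [Set.singleton_subset_iff]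
      exact hmem m hm
    refine ⟨(isPreconnected_singleton.prod isPreconnected_Icc).image H (Hcont.mono hsubQ),
      mem_image_of_mem H ⟨rfl, left_mem_Icc.2 (hmono k)⟩,
      mem_image_of_mem H ⟨rfl, right_mem_Icc.2 (hmono k)⟩⟩
  -- row and column sums
  set Bot : ℕ → ℝ := fun j => ∑ k ∈ Finset.range N,
    (g j k (H (a j, a (k+1))) - g j k (H (a j, a k))) with hBotdef
  set Top : ℕ → ℝ := fun j => ∑ k ∈ Finset.range N,
    (g j k (H (a (j+1), a (k+1))) - g j k (H (a (j+1), a k))) with hTopdef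
  -- Claim A : Top j = Bot j for j < N
  have claimA : ∀ j < N, Top j = Bot j := by
    intro j hj
    set v : ℕ → ℝ := fun k => g j k (H (a (j+1), a k)) - g j k (H (a j, a k)) with hvdef
    set w : ℕ → ℝ := fun k => g j k (H (a (j+1), a (k+1))) - g j k (H (a j, a (k+1)))
      with hwdef
    have hvw : ∀ k, k + 1 < N → w k = v (k+1) := by
      intro k hk1
      have hkN : k < N := Nat.lt_of_succ_lt hk1
      obtain ⟨hSconn, hSmem1, hSmem2⟩ := hvert j hj (k+1) (le_of_lt hk1)
      -- the edge lies in B j k and in B j (k+1)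
      have hSBk : H '' (Icc (a j) (a (j+1)) ×ˢ {a (k+1)}) ⊆ B j k := by
        refine (Set.image_mono (f := H) ?_).trans (hsq j hj k hkN)
        apply Set.prod_mono subset_rfl
        rw [Set.singleton_subset_iff]
        exact right_mem_Icc.2 (hmono k)
      have hSBk1 : H '' (Icc (a j) (a (j+1)) ×ˢ {a (k+1)}) ⊆ B j (k+1) := by
        refine (Set.image_mono (f := H) ?_).trans (hsq j hj (k+1) hk1)
        apply Set.prod_mono subset_rfl
        rw [Set.singleton_subset_iff]
        exact left_mem_Icc.2 (hmono (k+1))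
      have := wg_diff_const (f := f) isOpen_ball isOpen_ball
        (hg j k hj hkN) (hg j (k+1) hj hk1) hSconn hSBk hSBk1 hSmem2 hSmem1
      rw [hwdef, hvdef]
      simp only
      linarith [this]
    have hwn : w n = v 0 := by
      have hnN : n < N := Nat.lt_succ_self n
      -- the edge t = 0 (equal to the edge t = 1 pointwise)
      have hedge0 : ∀ s ∈ Icc (a j) (a (j+1)), H (s, (0:ℝ)) = H (s, (1:ℝ)) := by
        intro s hs
        exact Hper s (hIccsub j hj hs)
      obtain ⟨hSconn, hSmem1, hSmem2⟩ := hvert j hj 0 (Nat.zero_le N)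
      have hSB0 : H '' (Icc (a j) (a (j+1)) ×ˢ {a 0}) ⊆ B j 0 := by
        refine (Set.image_mono (f := H) ?_).trans (hsq j hj 0 hN)
        apply Set.prod_mono subset_rfl
        rw [Set.singleton_subset_iff]
        exact left_mem_Icc.2 (hmono 0)
      have hSBn : H '' (Icc (a j) (a (j+1)) ×ˢ {a 0}) ⊆ B j n := by
        rintro z ⟨p, ⟨hp1, hp2⟩, rfl⟩
        have hp2' : p.2 = a 0 := hp2
        have : H p = H (p.1, a N) := by
          have : H (p.1, (0:ℝ)) = H (p.1, (1:ℝ)) := hedge0 p.1 hp1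
          rw [← haN] at this
          rw [ha0] at hp2'
          calc H p = H (p.1, p.2) := by rw [Prod.mk.eta]
            _ = H (p.1, (0:ℝ)) := by rw [hp2']
            _ = H (p.1, a N) := this
        rw [this]
        apply hsq j hj n hnN
        exact mem_image_of_mem H ⟨hp1, by
          show a N ∈ Icc (a n) (a (n+1))
          exact right_mem_Icc.2 (hmono n)⟩
      have hdc := wg_diff_const (f := f) isOpen_ball isOpen_ball
        (hg j n hj hnN) (hg j 0 hj hN) hSconn hSBn hSB0 hSmem2 hSmem1
      -- rewrite the points of w n using periodicity
      have he1 : H (a (j+1), a (n+1)) = H (a (j+1), a 0) := by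
        rw [show n + 1 = N from rfl, haN, ha0]
        exact (Hper _ (hIccsub j hj (right_mem_Icc.2 (hmono j)))).symm
      have he2 : H (a j, a (n+1)) = H (a j, a 0) := by
        rw [show n + 1 = N from rfl, haN, ha0]
        exact (Hper _ (hIccsub j hj (left_mem_Icc.2 (hmono j)))).symm
      rw [hwdef, hvdef]
      simp only
      rw [he1, he2]
      linarith [hdc]
    have hsumvw : ∑ k ∈ Finset.range N, w k = ∑ k ∈ Finset.range N, v k := by
      rw [hNdef, Finset.sum_range_succ, Finset.sum_range_succ' v n]
      rw [hwn]
      congr 1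
      apply Finset.sum_congr rfl
      intro k hk
      exact hvw k (Nat.succ_lt_succ (Finset.mem_range.1 hk))
    have hTB : Top j - Bot j = ∑ k ∈ Finset.range N, w k - ∑ k ∈ Finset.range N, v k := by
      rw [hTopdef, hBotdef, hwdef, hvdef]
      simp only
      rw [← Finset.sum_sub_distrib, ← Finset.sum_sub_distrib]
      apply Finset.sum_congr rfl
      intro k _
      ring
    have := hTB.symm ▸ (sub_eq_zero.2 hsumvw)
    linarith [hTB, sub_eq_zero.2 hsumvw]
  -- Claim B : Bot (j+1) = Top j for j+1 < N
  have claimB : ∀ j, j + 1 < N → Bot (j+1) = Top j := by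
    intro j hj1
    have hjN : j < N := Nat.lt_of_succ_lt hj1
    rw [hBotdef, hTopdef]
    simp only
    apply Finset.sum_congr rfl
    intro k hk
    have hkN : k < N := Finset.mem_range.1 hk
    obtain ⟨hSconn, hSmem1, hSmem2⟩ := hhoriz (j+1) (le_of_lt hj1) k hkN
    have hSBjk : H '' (({a (j+1)} : Set ℝ) ×ˢ Icc (a k) (a (k+1))) ⊆ B j k := by
      refine (Set.image_mono (f := H) ?_).trans (hsq j hjN k hkN)
      apply Set.prod_mono _ subset_rfl
      rw [Set.singleton_subset_iff]
      exact right_mem_Icc.2 (hmono j)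
    have hSBj1k : H '' (({a (j+1)} : Set ℝ) ×ˢ Icc (a k) (a (k+1))) ⊆ B (j+1) k := by
      refine (Set.image_mono (f := H) ?_).trans (hsq (j+1) hj1 k hkN)
      apply Set.prod_mono _ subset_rfl
      rw [Set.singleton_subset_iff]
      exact left_mem_Icc.2 (hmono (j+1))
    have hdc := wg_diff_const (f := f) isOpen_ball isOpen_ball
      (hg (j+1) k hj1 hkN) (hg j k hjN hkN) hSconn hSBj1k hSBjk hSmem2 hSmem1
    linarith [hdc]
  -- induction : Top j = Bot 0 for all j < N
  have hind : ∀ j < N, Top j = Bot 0 := by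
    intro j
    induction j with
    | zero => intro hj; exact claimA 0 hj
    | succ m ih =>
        intro hj
        rw [claimA (m+1) hj, claimB m hj, ih (Nat.lt_of_succ_lt hj)]
  -- identify the two loop integrals
  have hγ₀ : ∫ t in (0:ℝ)..1, f (γ₀ t) (deriv γ₀ t) = Bot 0 := by
    rw [wg_loop_integral (Ω := Ω) hf.continuousOn h₀.1 h₀.2.1 hN
      (g := fun k => g 0 k) (B := fun k => B 0 k) ?_ (fun k hk => hg 0 k hN hk)]
    · rw [hBotdef]
      apply Finset.sum_congr rfl
      intro k hk
      have hkN : k < N := Finset.mem_range.1 hk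
      have e1 : H (a 0, a (k+1)) = γ₀ (a (k+1)) := by
        rw [ha0]; exact H0 _ (hmem (k+1) hkN)
      have e2 : H (a 0, a k) = γ₀ (a k) := by
        rw [ha0]; exact H0 _ (hmem k (le_of_lt hkN))
      rw [e1, e2, ha k, hadef]
    · intro k hk
      rintro z ⟨t, ht, rfl⟩
      have ht' : t ∈ Icc (a k) (a (k+1)) := by
        rw [ha k]; exact ht
      have ht01 : t ∈ Icc (0:ℝ) 1 := hIccsub k hk ht'
      rw [← H0 t ht01]
      apply hsq 0 hN k hk
      exact mem_image_of_mem H ⟨by rw [ha0]; exact ⟨le_refl 0, (hmem 1 hN).1⟩, ht'⟩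
    
  have hγ₁ : ∫ t in (0:ℝ)..1, f (γ₁ t) (deriv γ₁ t) = Top n := by
    have hnN : n < N := Nat.lt_succ_self n
    rw [wg_loop_integral (Ω := Ω) hf.continuousOn h₁.1 h₁.2.1 hN
      (g := fun k => g n k) (B := fun k => B n k) ?_ (fun k hk => hg n k hnN hk)]
    · rw [hTopdef]
      apply Finset.sum_congr rfl
      intro k hk
      have hkN : k < N := Finset.mem_range.1 hk
      have hN1 : a (n+1) = 1 := by rw [show n + 1 = N from rfl, haN]
      have e1 : H (a (n+1), a (k+1)) = γ₁ (a (k+1)) := by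
        rw [hN1]; exact H1 _ (hmem (k+1) hkN)
      have e2 : H (a (n+1), a k) = γ₁ (a k) := by
        rw [hN1]; exact H1 _ (hmem k (le_of_lt hkN))
      rw [e1, e2, ha k, hadef]
    · intro k hk
      rintro z ⟨t, ht, rfl⟩
      have ht' : t ∈ Icc (a k) (a (k+1)) := by
        rw [ha k]; exact ht
      have ht01 : t ∈ Icc (0:ℝ) 1 := hIccsub k hk ht'
      rw [← H1 t ht01]
      apply hsq n hnN k hk
      refine mem_image_of_mem H ⟨?_, ht'⟩
      rw [show (1:ℝ) = a (n+1) from by rw [show n + 1 = N from rfl, haN]]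
      exact right_mem_Icc.2 (hmono n)
  rw [hγ₀, hγ₁, hind n (Nat.lt_succ_self n)]


noncomputable def wgForm (comp : Fin 3 → E3 → ℝ) : E3 → (E3 →L[ℝ] ℝ) :=
  fun x => ∑ k, comp k x • (ContinuousLinearMap.proj (R := ℝ) (φ := fun _ : Fin 3 => ℝ) k)

lemma wgForm_apply (comp : Fin 3 → E3 → ℝ) (x v : E3) :
    wgForm comp x v = ∑ k, comp k x * v k := by
  simp [wgForm, ContinuousLinearMap.sum_apply, ContinuousLinearMap.smul_apply,
    ContinuousLinearMap.proj_apply, smul_eq_mul]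

lemma wgForm_contDiffOn {Ω : Set E3} (comp : Fin 3 → E3 → ℝ)
    (h : ∀ k, ContDiffOn ℝ 1 (comp k) Ω) : ContDiffOn ℝ 1 (wgForm comp) Ω := by
  apply ContDiffOn.sum
  intro k _
  exact (h k).smul contDiffOn_const

lemma wgForm_fderiv_apply {Ω : Set E3} (hΩ : IsOpen Ω) (comp : Fin 3 → E3 → ℝ)
    (h : ∀ k, ContDiffOn ℝ 1 (comp k) Ω) {x : E3} (hx : x ∈ Ω) (u v : E3) :
    fderiv ℝ (wgForm comp) x u v = ∑ k, (fderiv ℝ (comp k) x u) * v k := by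
  have hdk : ∀ k, DifferentiableAt ℝ (comp k) x := fun k =>
    ((h k).contDiffAt (hΩ.mem_nhds hx)).differentiableAt one_ne_zero
  have e : fderiv ℝ (wgForm comp) x = ∑ k, (fderiv ℝ (comp k) x).smulRight
      (ContinuousLinearMap.proj (R := ℝ) (φ := fun _ : Fin 3 => ℝ) k) := by
    unfold wgForm
    rw [fderiv_fun_sum (u := Finset.univ) (A := fun k y => comp k y • ContinuousLinearMap.proj (R := ℝ) (φ := fun _ : Fin 3 => ℝ) k) (fun k _ => ((hdk k).smul_const _))]
    apply Finset.sum_congr rfl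
    intro k _
    exact fderiv_smul_const (hdk k) (ContinuousLinearMap.proj (R := ℝ) (φ := fun _ : Fin 3 => ℝ) k)
  rw [e]
  simp [ContinuousLinearMap.sum_apply, ContinuousLinearMap.smulRight_apply,
    ContinuousLinearMap.proj_apply, smul_eq_mul]

lemma wgForm_symm {Ω : Set E3} (hΩ : IsOpen Ω) (comp : Fin 3 → E3 → ℝ)
    (h : ∀ k, ContDiffOn ℝ 1 (comp k) Ω)
    (hclosed : ∀ x ∈ Ω, ∀ k l, pd l (comp k) x = pd k (comp l) x) :
    ∀ x ∈ Ω, ∀ u v : E3, fderiv ℝ (wgForm comp) x u v = fderiv ℝ (wgForm comp) x v u := by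
  intro x hx u v
  rw [wgForm_fderiv_apply hΩ comp h hx, wgForm_fderiv_apply hΩ comp h hx]
  simp only [wg_fderiv_apply, Finset.sum_mul]
  rw [Finset.sum_comm]
  apply Finset.sum_congr rfl
  intro k _
  apply Finset.sum_congr rfl
  intro l _
  rw [hclosed x hx k l]
  ring

lemma wg_pd_add {A B : E3 → ℝ} {x : E3} (l : Fin 3) (hA : DifferentiableAt ℝ A x)
    (hB : DifferentiableAt ℝ B x) :
    pd l (fun y => A y + B y) x = pd l A x + pd l B x := by
  unfold pd
  rw [fderiv_fun_add hA hB]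
  simp

lemma wg_pd_sub {A B : E3 → ℝ} {x : E3} (l : Fin 3) (hA : DifferentiableAt ℝ A x)
    (hB : DifferentiableAt ℝ B x) :
    pd l (fun y => A y - B y) x = pd l A x - pd l B x := by
  unfold pd
  rw [fderiv_fun_sub hA hB]
  simp

lemma wg_pd_congr {A B : E3 → ℝ} {Ω : Set E3} (hΩ : IsOpen Ω) {x : E3} (hx : x ∈ Ω)
    (h : ∀ y ∈ Ω, A y = B y) (l : Fin 3) : pd l A x = pd l B x := by
  unfold pd
  rw [Filter.EventuallyEq.fderiv_eq (Filter.eventuallyEq_of_mem (hΩ.mem_nhds hx) h)]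

lemma wg_two_forms {Ω : Set E3} (hΩ : IsOpen Ω) {f₁ f₂ : E3 → (E3 →L[ℝ] ℝ)}
    (hf₁ : ContDiffOn ℝ 1 f₁ Ω)
    (hsym₁ : ∀ x ∈ Ω, ∀ u v : E3, fderiv ℝ f₁ x u v = fderiv ℝ f₁ x v u)
    (hf₂ : ContDiffOn ℝ 1 f₂ Ω)
    (hsym₂ : ∀ x ∈ Ω, ∀ u v : E3, fderiv ℝ f₂ x u v = fderiv ℝ f₂ x v u)
    (C : E3 →L[ℝ] ℝ) (hC : ∀ x ∈ Ω, f₁ x - f₂ x = C)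
    {γ : ℝ → E3} (hγ : IsC1LoopIn γ Ω) :
    ∫ t in (0:ℝ)..1, f₁ (γ t) (deriv γ t) = ∫ t in (0:ℝ)..1, f₂ (γ t) (deriv γ t) := by
  classical
  obtain ⟨hγC, hγΩ, hγloop⟩ := hγ
  set K : Set E3 := γ '' Icc 0 1 with hKdef
  have hKcomp : IsCompact K := isCompact_Icc.image_of_continuousOn hγC.continuousOn
  have hKΩ : K ⊆ Ω := by rintro z ⟨t, ht, rfl⟩; exact hγΩ t ht
  obtain ⟨δ, hδpos, hδ⟩ := hKcomp.exists_thickening_subset_open hΩ hKΩ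
  have hballΩ : ∀ z ∈ K, ball z δ ⊆ Ω :=
    fun z hz => (ball_subset_thickening hz δ).trans hδ
  have huc := isCompact_Icc.uniformContinuousOn_of_continuous hγC.continuousOn
  rw [Metric.uniformContinuousOn_iff] at huc
  obtain ⟨η, hη, hucη⟩ := huc δ hδpos
  obtain ⟨n, hn⟩ := exists_nat_one_div_lt hη
  set N : ℕ := n + 1 with hNdef
  have hN : 0 < N := Nat.succ_pos n
  have hNR : (0:ℝ) < N := Nat.cast_pos.2 hN
  have hNn : ((N:ℝ)) = (n:ℝ) + 1 := by rw [hNdef]; push_cast; ring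
  set a : ℕ → ℝ := fun k => (k:ℝ)/N with hadef
  have ha : ∀ k : ℕ, a (k+1) = ((k:ℝ)+1)/N := by intro k; rw [hadef]; push_cast; ring
  have hmono : ∀ k : ℕ, a k ≤ a (k+1) := by
    intro k; rw [ha, hadef]
    exact (div_le_div_iff_of_pos_right hNR).2 (by linarith)
  have hstep : ∀ k : ℕ, a (k+1) - a k = 1/N := by
    intro k; rw [ha, hadef]; ring
  have hmem : ∀ k ≤ N, a k ∈ Icc (0:ℝ) 1 := by
    intro k hk
    constructor
    · rw [hadef]; positivity
    · rw [hadef, div_le_one hNR]; exact_mod_cast hk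
  have ha0 : a 0 = 0 := by rw [hadef]; simp
  have haN : a N = 1 := by rw [hadef]; field_simp
  have hIccsub : ∀ k < N, Icc (a k) (a (k+1)) ⊆ Icc (0:ℝ) 1 := by
    intro k hk
    exact Icc_subset_Icc (hmem k (le_of_lt hk)).1 (hmem (k+1) hk).2
  set B : ℕ → Set E3 := fun k => ball (γ (a k)) δ with hBdef
  have hBΩ : ∀ k < N, B k ⊆ Ω :=
    fun k hk => hballΩ _ (mem_image_of_mem γ (hmem k hk.le))
  have himg : ∀ k < N, γ '' Icc (a k) (a (k+1)) ⊆ B k := by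
    intro k hk
    rintro z ⟨t, ht, rfl⟩
    have ht01 : t ∈ Icc (0:ℝ) 1 := hIccsub k hk ht
    apply mem_ball.2
    rw [dist_comm]
    apply hucη _ (hmem k hk.le) _ ht01
    rw [Real.dist_eq, abs_sub_comm, abs_of_nonneg (by linarith [ht.1])]
    calc t - a k ≤ 1/N := by linarith [ht.2, hstep k]
      _ = 1/((n:ℝ)+1) := by rw [hNn]
      _ < η := hn
  have hprim₁ : ∀ k : ℕ, k < N → ∃ g : E3 → ℝ, ∀ y ∈ B k, HasFDerivAt g (f₁ y) y :=
    fun k hk => wg_primitive hΩ hf₁ hsym₁ (hBΩ k hk)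
  have hprim₂ : ∀ k : ℕ, k < N → ∃ g : E3 → ℝ, ∀ y ∈ B k, HasFDerivAt g (f₂ y) y :=
    fun k hk => wg_primitive hΩ hf₂ hsym₂ (hBΩ k hk)
  choose! g₁ hg₁ using hprim₁
  choose! g₂ hg₂ using hprim₂
  have himg' : ∀ k < N, γ '' Icc ((k:ℝ)/N) (((k:ℝ)+1)/N) ⊆ B k := by
    intro k hk
    have h := himg k hk
    rw [ha k] at h
    exact h
  have I₁ := wg_loop_integral (Ω := Ω) hf₁.continuousOn hγC hγΩ hN
    (g := g₁) (B := B) himg' (fun k hk => hg₁ k hk)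
  have I₂ := wg_loop_integral (Ω := Ω) hf₂.continuousOn hγC hγΩ hN
    (g := g₂) (B := B) himg' (fun k hk => hg₂ k hk)
  have hper : ∀ k < N,
      g₁ k (γ (a (k+1))) - g₂ k (γ (a (k+1))) - C (γ (a (k+1)))
        = g₁ k (γ (a k)) - g₂ k (γ (a k)) - C (γ (a k)) := by
    intro k hk
    have hmem1 : γ (a (k+1)) ∈ B k :=
      himg k hk (mem_image_of_mem γ (right_mem_Icc.2 (hmono k)))
    have hmem0 : γ (a k) ∈ B k :=
      himg k hk (mem_image_of_mem γ (left_mem_Icc.2 (hmono k)))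
    apply wg_const_on (W := B k) (F := fun x => g₁ k x - g₂ k x - C x) isOpen_ball ?_ (convex_ball _ _).isPreconnected
      subset_rfl hmem1 hmem0
    intro z hz
    have hzΩ : z ∈ Ω := hBΩ k hk hz
    have h2 : HasFDerivAt (fun x => g₁ k x - g₂ k x - C x) (f₁ z - f₂ z - C) z :=
      ((hg₁ k hk z hz).sub (hg₂ k hk z hz)).sub C.hasFDerivAt
    rwa [hC z hzΩ, sub_self] at h2
  have htel : ∑ k ∈ Finset.range N, (g₁ k (γ (((k:ℝ)+1)/N)) - g₁ k (γ ((k:ℝ)/N)))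
      = ∑ k ∈ Finset.range N, (g₂ k (γ (((k:ℝ)+1)/N)) - g₂ k (γ ((k:ℝ)/N))) := by
    have e : ∑ k ∈ Finset.range N, ((g₁ k (γ (((k:ℝ)+1)/N)) - g₁ k (γ ((k:ℝ)/N)))
        - (g₂ k (γ (((k:ℝ)+1)/N)) - g₂ k (γ ((k:ℝ)/N))))
        = ∑ k ∈ Finset.range N, (C (γ (a (k+1))) - C (γ (a k))) := by
      apply Finset.sum_congr rfl
      intro k hk
      have hkN : k < N := Finset.mem_range.1 hk
      have h := hper k hkN
      rw [ha k] at h ⊢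
      have e0 : a k = (k:ℝ)/N := by rw [hadef]
      rw [e0] at h ⊢
      linarith [h]
    have e2 : ∑ k ∈ Finset.range N, (C (γ (a (k+1))) - C (γ (a k)))
        = C (γ (a N)) - C (γ (a 0)) := Finset.sum_range_sub (fun k => C (γ (a k))) N
    rw [e2, ha0, haN, ← hγloop, sub_self] at e
    rw [← sub_eq_zero, ← Finset.sum_sub_distrib]
    exact e
  rw [I₁, I₂, htel]

end WgAux

/-- Burgers-vector well-definedness at small deformations: if `ω₁, ω₂` are C¹
skew-symmetric matrix fields on a connected open `Ω ⊆ ℝ³`, each with gradient equal to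
the field `E` derived from a locally compatible strain `ε`, then the loop integrals of
`ε + ω₁` and `ε + ω₂` agree over any two freely homotopic C¹ loops in `Ω`. -/
theorem weingarten_stmt7 (Ω : Set E3) (hΩ : IsOpen Ω) (hconn : IsConnected Ω)
    (ε : Fin 3 → Fin 3 → E3 → ℝ)
    (hreg : ∀ i j, ContDiffOn ℝ 2 (ε i j) Ω)
    (hsym : ∀ i j, ∀ x ∈ Ω, ε i j x = ε j i x)
    (hSV : StVenant ε Ω)
    (ω₁ ω₂ : E3 → Matrix (Fin 3) (Fin 3) ℝ)
    (hω₁reg : ∀ i k, ContDiffOn ℝ 1 (fun x => ω₁ x i k) Ω)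
    (hω₂reg : ∀ i k, ContDiffOn ℝ 1 (fun x => ω₂ x i k) Ω)
    (hω₁skew : ∀ x ∈ Ω, (ω₁ x)ᵀ = -(ω₁ x))
    (hω₂skew : ∀ x ∈ Ω, (ω₂ x)ᵀ = -(ω₂ x))
    (hω₁grad : ∀ x ∈ Ω, ∀ i k l : Fin 3, pd l (fun y => ω₁ y i k) x = Efield ε i k l x)
    (hω₂grad : ∀ x ∈ Ω, ∀ i k l : Fin 3, pd l (fun y => ω₂ y i k) x = Efield ε i k l x)
    (γ₀ γ₁ : ℝ → E3) (h₀ : IsC1LoopIn γ₀ Ω) (h₁ : IsC1LoopIn γ₁ Ω)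
    (hhom : FreelyHomotopicIn γ₀ γ₁ Ω) :
    ∀ i : Fin 3,
      (∫ t in (0:ℝ)..1, ∑ k, (ε i k (γ₀ t) + ω₁ (γ₀ t) i k) * deriv γ₀ t k) =
      (∫ t in (0:ℝ)..1, ∑ k, (ε i k (γ₁ t) + ω₂ (γ₁ t) i k) * deriv γ₁ t k) := by
  intro i
  have hεdiff : ∀ (p q : Fin 3), ∀ x ∈ Ω, DifferentiableAt ℝ (ε p q) x := fun p q x hx =>
    ((hreg p q).contDiffAt (hΩ.mem_nhds hx)).differentiableAt (by norm_num)
  have hω₁diff : ∀ (p q : Fin 3), ∀ x ∈ Ω, DifferentiableAt ℝ (fun y => ω₁ y p q) x :=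
    fun p q x hx => ((hω₁reg p q).contDiffAt (hΩ.mem_nhds hx)).differentiableAt one_ne_zero
  have hω₂diff : ∀ (p q : Fin 3), ∀ x ∈ Ω, DifferentiableAt ℝ (fun y => ω₂ y p q) x :=
    fun p q x hx => ((hω₂reg p q).contDiffAt (hΩ.mem_nhds hx)).differentiableAt one_ne_zero
  have hreg₁ : ∀ k, ContDiffOn ℝ 1 (fun x => ε i k x + ω₁ x i k) Ω :=
    fun k => ((hreg i k).of_le one_le_two).add (hω₁reg i k)
  have hreg₂ : ∀ k, ContDiffOn ℝ 1 (fun x => ε i k x + ω₂ x i k) Ω :=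
    fun k => ((hreg i k).of_le one_le_two).add (hω₂reg i k)
  have hclosed₁ : ∀ x ∈ Ω, ∀ k l : Fin 3, pd l (fun y => ε i k y + ω₁ y i k) x
      = pd k (fun y => ε i l y + ω₁ y i l) x := by
    intro x hx k l
    rw [wg_pd_add l (hεdiff i k x hx) (hω₁diff i k x hx),
        wg_pd_add k (hεdiff i l x hx) (hω₁diff i l x hx),
        hω₁grad x hx i k l, hω₁grad x hx i l k]
    have hsympd := wg_pd_congr hΩ hx (hsym k l) i
    simp only [Efield]
    linarith
  have hclosed₂ : ∀ x ∈ Ω, ∀ k l : Fin 3, pd l (fun y => ε i k y + ω₂ y i k) x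
      = pd k (fun y => ε i l y + ω₂ y i l) x := by
    intro x hx k l
    rw [wg_pd_add l (hεdiff i k x hx) (hω₂diff i k x hx),
        wg_pd_add k (hεdiff i l x hx) (hω₂diff i l x hx),
        hω₂grad x hx i k l, hω₂grad x hx i l k]
    have hsympd := wg_pd_congr hΩ hx (hsym k l) i
    simp only [Efield]
    linarith
  have hf₁ : ContDiffOn ℝ 1 (wgForm (fun k x => ε i k x + ω₁ x i k)) Ω :=
    wgForm_contDiffOn _ hreg₁
  have hf₂ : ContDiffOn ℝ 1 (wgForm (fun k x => ε i k x + ω₂ x i k)) Ω :=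
    wgForm_contDiffOn _ hreg₂
  have hsymm₁ := wgForm_symm hΩ (fun k x => ε i k x + ω₁ x i k) hreg₁ hclosed₁
  have hsymm₂ := wgForm_symm hΩ (fun k x => ε i k x + ω₂ x i k) hreg₂ hclosed₂
  -- the constant difference of the two forms
  have hx₀ : γ₁ 0 ∈ Ω := h₁.2.1 0 ⟨le_refl 0, zero_le_one⟩
  set C : E3 →L[ℝ] ℝ := ∑ m, (ω₁ (γ₁ 0) i m - ω₂ (γ₁ 0) i m) •
    (ContinuousLinearMap.proj (R := ℝ) (φ := fun _ : Fin 3 => ℝ) m) with hCdef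
  have hCapp : ∀ v : E3, C v = ∑ m, (ω₁ (γ₁ 0) i m - ω₂ (γ₁ 0) i m) * v m := by
    intro v
    rw [hCdef]
    simp [ContinuousLinearMap.sum_apply, ContinuousLinearMap.smul_apply,
      ContinuousLinearMap.proj_apply, smul_eq_mul]
  have hdzero : ∀ m : Fin 3, ∀ x ∈ Ω,
      HasFDerivAt (fun y => ω₁ y i m - ω₂ y i m) (0 : E3 →L[ℝ] ℝ) x := by
    intro m x hx
    have hda := hω₁diff i m x hx
    have hdb := hω₂diff i m x hx
    have hz : fderiv ℝ (fun y => ω₁ y i m - ω₂ y i m) x = 0 := by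
      refine ContinuousLinearMap.ext fun v => ?_
      rw [wg_fderiv_apply]
      have hpdz : ∀ l, pd l (fun y => ω₁ y i m - ω₂ y i m) x = 0 := by
        intro l
        rw [wg_pd_sub l hda hdb, hω₁grad x hx i m l, hω₂grad x hx i m l, sub_self]
      simp [hpdz]
    have h3 : HasFDerivAt (fun y => ω₁ y i m - ω₂ y i m) (fderiv ℝ (fun y => ω₁ y i m - ω₂ y i m) x) x := (hda.sub hdb).hasFDerivAt
    rwa [hz] at h3
  have hconstd : ∀ x ∈ Ω, ∀ m : Fin 3,
      ω₁ x i m - ω₂ x i m = ω₁ (γ₁ 0) i m - ω₂ (γ₁ 0) i m := by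
    intro x hx m
    exact wg_const_on hΩ (hdzero m) hconn.isPreconnected subset_rfl hx hx₀
  have hCeq : ∀ x ∈ Ω, wgForm (fun k x => ε i k x + ω₁ x i k) x
      - wgForm (fun k x => ε i k x + ω₂ x i k) x = C := by
    intro x hx
    refine ContinuousLinearMap.ext fun v => ?_
    rw [ContinuousLinearMap.sub_apply, wgForm_apply, wgForm_apply, hCapp,
      ← Finset.sum_sub_distrib]
    apply Finset.sum_congr rfl
    intro m _
    rw [← hconstd x hx m]
    ring
  calc (∫ t in (0:ℝ)..1, ∑ k, (ε i k (γ₀ t) + ω₁ (γ₀ t) i k) * deriv γ₀ t k)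
      = ∫ t in (0:ℝ)..1, wgForm (fun k x => ε i k x + ω₁ x i k) (γ₀ t) (deriv γ₀ t) := by
        apply intervalIntegral.integral_congr
        intro t _
        simp only [wgForm_apply]
    _ = ∫ t in (0:ℝ)..1, wgForm (fun k x => ε i k x + ω₁ x i k) (γ₁ t) (deriv γ₁ t) :=
        wg_homotopy hΩ hf₁ hsymm₁ h₀ h₁ hhom
    _ = ∫ t in (0:ℝ)..1, wgForm (fun k x => ε i k x + ω₂ x i k) (γ₁ t) (deriv γ₁ t) :=
        wg_two_forms hΩ hf₁ hsymm₁ hf₂ hsymm₂ C hCeq h₁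
    _ = ∫ t in (0:ℝ)..1, ∑ k, (ε i k (γ₁ t) + ω₂ (γ₁ t) i k) * deriv γ₁ t k := by
        apply intervalIntegral.integral_congr
        intro t _
        simp only [wgForm_apply]
end
end

section
/- Let Ω ⊆ ℝ³ be a connected open set, let C be a twice continuously differentiable positive-definite symmetric 3×3 matrix field on Ω with Christoffel symbols Γ, and let F : Ω → ℝ^{3×3} be a continuously differentiable matrix field solving the Pfaffian system F_{iα,β} = Σ_ρ Γ^ρ_{αβ} F_{iρ} on Ω. If F(x₀)ᵀ F(x₀) = C(x₀) at some point x₀ ∈ Ω, then F(x)ᵀ F(x) = C(x) for every x ∈ Ω. -/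
noncomputable section

open Matrix

/-- The Christoffel symbols `Γ^γ_{αβ}` of a positive-definite symmetric matrix field `C`:
`Γ^γ_{αβ} = ½ Σ_μ (C⁻¹)^{γμ}(C_{αμ,β} + C_{βμ,α} − C_{αβ,μ})`. -/
noncomputable def christoffel (C : E3 → Matrix (Fin 3) (Fin 3) ℝ)
    (γ α β : Fin 3) (x : E3) : ℝ :=
  (1 / 2) * ∑ μ, (C x)⁻¹ γ μ *
    (pd β (fun y => C y α μ) x + pd α (fun y => C y β μ) x - pd μ (fun y => C y α β) x)

/-- `F` solves the Pfaffian system associated with `C` on `Ω`: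
`F_{iα,β} = Σ_ρ Γ^ρ_{αβ} F_{iρ}` on `Ω`. -/
def SolvesPfaffian (C F : E3 → Matrix (Fin 3) (Fin 3) ℝ) (Ω : Set E3) : Prop :=
  ∀ x ∈ Ω, ∀ i α β : Fin 3,
    pd β (fun y => F y i α) x = ∑ ρ, christoffel C ρ α β x * F x i ρ

section WeingartenAux

variable {Ω : Set E3} {C : E3 → Matrix (Fin 3) (Fin 3) ℝ}

lemma pd_congr (hΩ : IsOpen Ω) {x : E3} (hx : x ∈ Ω) {f g : E3 → ℝ}
    (h : ∀ y ∈ Ω, f y = g y) (j : Fin 3) : pd j f x = pd j g x := by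
  unfold pd
  rw [Filter.EventuallyEq.fderiv_eq (Filter.eventuallyEq_of_mem (hΩ.mem_nhds hx) h)]

lemma lower_christoffel (hpos : ∀ x ∈ Ω, (C x).PosDef) (hsym : ∀ x ∈ Ω, (C x).IsSymm)
    {x : E3} (hx : x ∈ Ω) (α β γ : Fin 3) :
    ∑ ρ, christoffel C ρ α β x * C x ρ γ =
      (1/2) * (pd β (fun y => C y α γ) x + pd α (fun y => C y β γ) x
        - pd γ (fun y => C y α β) x) := by
  have hdet : IsUnit (C x).det := (hpos x hx).det_pos.ne'.isUnit
  have h1 : ∀ μ, ∑ ρ, C x ρ γ * (C x)⁻¹ ρ μ = if γ = μ then (1:ℝ) else 0 := by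
    intro μ
    calc ∑ ρ, C x ρ γ * (C x)⁻¹ ρ μ = ∑ ρ, C x γ ρ * (C x)⁻¹ ρ μ :=
          Finset.sum_congr rfl fun ρ _ => by rw [(hsym x hx).apply γ ρ]
      _ = (C x * (C x)⁻¹) γ μ := (Matrix.mul_apply).symm
      _ = (1 : Matrix (Fin 3) (Fin 3) ℝ) γ μ := by rw [Matrix.mul_nonsing_inv _ hdet]
      _ = if γ = μ then 1 else 0 := Matrix.one_apply
  have swap : ∀ (A : Fin 3 → Fin 3 → ℝ) (T c : Fin 3 → ℝ),
      ∑ ρ, ((1/2 : ℝ) * ∑ μ, A ρ μ * T μ) * c ρ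
        = ∑ μ, (1/2 : ℝ) * T μ * ∑ ρ, c ρ * A ρ μ := by
    intro A T c
    simp only [Finset.mul_sum, Finset.sum_mul]
    rw [Finset.sum_comm]
    exact Finset.sum_congr rfl fun μ _ => Finset.sum_congr rfl fun ρ _ => by ring
  unfold christoffel
  rw [swap (fun ρ μ => (C x)⁻¹ ρ μ)
      (fun μ => pd β (fun y => C y α μ) x + pd α (fun y => C y β μ) x - pd μ (fun y => C y α β) x)
      (fun ρ => C x ρ γ)]
  simp only [h1]
  simp [Finset.sum_ite_eq, mul_ite]

lemma compat (hΩ : IsOpen Ω) (hpos : ∀ x ∈ Ω, (C x).PosDef) (hsym : ∀ x ∈ Ω, (C x).IsSymm)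
    {x : E3} (hx : x ∈ Ω) (α γ β : Fin 3) :
    ∑ ρ, christoffel C ρ α β x * C x ρ γ + ∑ ρ, christoffel C ρ γ β x * C x α ρ
      = pd β (fun y => C y α γ) x := by
  have hsx : ∀ a b, ∀ y ∈ Ω, C y a b = C y b a := fun a b y hy => (hsym y hy).apply b a
  have h2 : ∑ ρ, christoffel C ρ γ β x * C x α ρ = ∑ ρ, christoffel C ρ γ β x * C x ρ α :=
    Finset.sum_congr rfl fun ρ _ => by rw [(hsym x hx).apply α ρ]
  rw [h2, lower_christoffel hpos hsym hx, lower_christoffel hpos hsym hx]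
  rw [pd_congr hΩ hx (hsx γ α) β, pd_congr hΩ hx (hsx β α) γ, pd_congr hΩ hx (hsx γ β) α]
  ring

def Gm (C F : E3 → Matrix (Fin 3) (Fin 3) ℝ) (y : E3) : Matrix (Fin 3) (Fin 3) ℝ :=
  (F y)ᵀ * F y - C y

lemma Gm_entry {F : E3 → Matrix (Fin 3) (Fin 3) ℝ} (y : E3) (a b : Fin 3) :
    Gm C F y a b = (∑ i, F y i a * F y i b) - C y a b := by
  simp [Gm, Matrix.sub_apply, Matrix.mul_apply, Matrix.transpose_apply]

variable {F : E3 → Matrix (Fin 3) (Fin 3) ℝ}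

lemma diffAt (hΩ : IsOpen Ω) {f : E3 → ℝ} {n : WithTop ℕ∞} (hn : 1 ≤ n)
    (hf : ContDiffOn ℝ n f Ω) {x : E3} (hx : x ∈ Ω) : DifferentiableAt ℝ f x :=
  (hf.differentiableOn (zero_lt_one.trans_le hn).ne').differentiableAt (hΩ.mem_nhds hx)

lemma diffG (hΩ : IsOpen Ω) (hCreg : ∀ a b, ContDiffOn ℝ 2 (fun x => C x a b) Ω)
    (hFreg : ∀ i a, ContDiffOn ℝ 1 (fun x => F x i a) Ω)
    {x : E3} (hx : x ∈ Ω) (α γ : Fin 3) :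
    DifferentiableAt ℝ (fun y => Gm C F y α γ) x := by
  have : (fun y => Gm C F y α γ) = fun y => (∑ i, F y i α * F y i γ) - C y α γ :=
    funext fun y => Gm_entry y α γ
  rw [this]
  exact DifferentiableAt.sub
    (DifferentiableAt.fun_sum fun i _ =>
      (diffAt hΩ le_rfl (hFreg i α) hx).mul (diffAt hΩ le_rfl (hFreg i γ) hx))
    (diffAt hΩ one_le_two (hCreg α γ) hx)

lemma pd_Gm (hΩ : IsOpen Ω) (hCreg : ∀ a b, ContDiffOn ℝ 2 (fun x => C x a b) Ω)
    (hpos : ∀ x ∈ Ω, (C x).PosDef) (hsym : ∀ x ∈ Ω, (C x).IsSymm)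
    (hFreg : ∀ i a, ContDiffOn ℝ 1 (fun x => F x i a) Ω)
    (hF : SolvesPfaffian C F Ω) {x : E3} (hx : x ∈ Ω) (α γ β : Fin 3) :
    pd β (fun y => Gm C F y α γ) x
      = ∑ ρ, christoffel C ρ α β x * Gm C F x ρ γ
        + ∑ ρ, christoffel C ρ γ β x * Gm C F x α ρ := by
  have dF : ∀ i a, DifferentiableAt ℝ (fun y => F y i a) x :=
    fun i a => diffAt hΩ le_rfl (hFreg i a) hx
  have dC : ∀ a b, DifferentiableAt ℝ (fun y => C y a b) x :=
    fun a b => diffAt hΩ one_le_two (hCreg a b) hx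
  have dSum : DifferentiableAt ℝ (fun y => ∑ i, F y i α * F y i γ) x :=
    DifferentiableAt.fun_sum fun i _ => (dF i α).mul (dF i γ)
  have pdmul : ∀ i, pd β (fun y => F y i α * F y i γ) x
      = pd β (fun y => F y i α) x * F x i γ + F x i α * pd β (fun y => F y i γ) x := by
    intro i
    unfold pd
    rw [fderiv_fun_mul (dF i α) (dF i γ)]
    simp [ContinuousLinearMap.add_apply, ContinuousLinearMap.smul_apply, smul_eq_mul]
    ring
  have pdsub : pd β (fun y => Gm C F y α γ) x
      = pd β (fun y => ∑ i, F y i α * F y i γ) x - pd β (fun y => C y α γ) x := by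
    have h : (fun y => Gm C F y α γ) = fun y => (∑ i, F y i α * F y i γ) - C y α γ :=
      funext fun y => Gm_entry y α γ
    unfold pd
    rw [h, fderiv_fun_sub dSum (dC α γ)]
    simp
  have pdsum : pd β (fun y => ∑ i, F y i α * F y i γ) x
      = ∑ i, pd β (fun y => F y i α * F y i γ) x := by
    unfold pd
    rw [fderiv_fun_sum (A := fun i y => F y i α * F y i γ) (fun i _ => (dF i α).mul (dF i γ))]
    simp [ContinuousLinearMap.sum_apply]
  have key : pd β (fun y => ∑ i, F y i α * F y i γ) x
      = ∑ ρ, christoffel C ρ α β x * ∑ i, F x i ρ * F x i γ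
        + ∑ ρ, christoffel C ρ γ β x * ∑ i, F x i α * F x i ρ := by
    rw [pdsum]
    have : ∀ i, pd β (fun y => F y i α * F y i γ) x
        = (∑ ρ, christoffel C ρ α β x * F x i ρ) * F x i γ
          + F x i α * (∑ ρ, christoffel C ρ γ β x * F x i ρ) := by
      intro i
      rw [pdmul i, hF x hx i α β, hF x hx i γ β]
    simp only [this]
    rw [Finset.sum_add_distrib]
    congr 1
    · simp only [Finset.sum_mul, Finset.mul_sum]
      rw [Finset.sum_comm]
      exact Finset.sum_congr rfl fun ρ _ => Finset.sum_congr rfl fun i _ => by ring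
    · simp only [Finset.sum_mul, Finset.mul_sum]
      rw [Finset.sum_comm]
      exact Finset.sum_congr rfl fun ρ _ => Finset.sum_congr rfl fun i _ => by ring
  rw [pdsub, key, ← compat hΩ hpos hsym hx α γ β]
  simp only [Gm_entry, mul_sub]
  rw [Finset.sum_sub_distrib, Finset.sum_sub_distrib]
  ring

lemma pdC_contOn (hΩ : IsOpen Ω) (hCreg : ∀ a b, ContDiffOn ℝ 2 (fun x => C x a b) Ω)
    (j a b : Fin 3) : ContinuousOn (fun x => pd j (fun y => C y a b) x) Ω := by
  have h := (hCreg a b).continuousOn_fderiv_of_isOpen hΩ (by norm_num)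
  exact h.clm_apply continuousOn_const

lemma Cinv_contOn (hΩ : IsOpen Ω) (hCreg : ∀ a b, ContDiffOn ℝ 2 (fun x => C x a b) Ω)
    (hpos : ∀ x ∈ Ω, (C x).PosDef) (a b : Fin 3) :
    ContinuousOn (fun x => (C x)⁻¹ a b) Ω := by
  intro x hx
  have hCAt : ContinuousAt C x :=
    continuousAt_pi.2 fun i => continuousAt_pi.2 fun j =>
      ((hCreg i j).continuousOn.continuousAt (hΩ.mem_nhds hx))
  have hinv : ContinuousAt Ring.inverse (C x).det := by
    rw [Ring.inverse_eq_inv']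
    exact continuousAt_inv₀ (hpos x hx).det_pos.ne'
  have h1 : ContinuousAt (fun y => (C y)⁻¹) x :=
    (continuousAt_matrix_inv (C x) hinv).comp hCAt
  have h2 : ContinuousAt (fun y => (C y)⁻¹ a b) x :=
    ((continuous_apply b).continuousAt.comp (((continuous_apply a).continuousAt).comp h1))
  exact h2.continuousWithinAt

lemma christoffel_contOn (hΩ : IsOpen Ω) (hCreg : ∀ a b, ContDiffOn ℝ 2 (fun x => C x a b) Ω)
    (hpos : ∀ x ∈ Ω, (C x).PosDef) (ρ α β : Fin 3) :
    ContinuousOn (christoffel C ρ α β) Ω := by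
  unfold christoffel
  apply continuousOn_const.mul
  apply continuousOn_finset_sum
  intro μ _
  exact (Cinv_contOn hΩ hCreg hpos ρ μ).mul
    (((pdC_contOn hΩ hCreg β α μ).add (pdC_contOn hΩ hCreg α β μ)).sub
      (pdC_contOn hΩ hCreg μ α β))

lemma Gm_contOn (hCreg : ∀ a b, ContDiffOn ℝ 2 (fun x => C x a b) Ω)
    (hFreg : ∀ i a, ContDiffOn ℝ 1 (fun x => F x i a) Ω) (a b : Fin 3) :
    ContinuousOn (fun y => Gm C F y a b) Ω := by
  have : (fun y => Gm C F y a b) = fun y => (∑ i, F y i a * F y i b) - C y a b :=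
    funext fun y => Gm_entry y a b
  rw [this]
  exact (continuousOn_finset_sum _ fun i _ =>
    ((hFreg i a).continuousOn.mul (hFreg i b).continuousOn)).sub (hCreg a b).continuousOn

lemma zero_on_closedBall (hΩ : IsOpen Ω) (hCreg : ∀ a b, ContDiffOn ℝ 2 (fun x => C x a b) Ω)
    (hpos : ∀ x ∈ Ω, (C x).PosDef) (hsym : ∀ x ∈ Ω, (C x).IsSymm)
    (hFreg : ∀ i a, ContDiffOn ℝ 1 (fun x => F x i a) Ω)
    (hF : SolvesPfaffian C F Ω) {x : E3} {r : ℝ}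
    (hball : Metric.closedBall x r ⊆ Ω) (hr : 0 ≤ r) (h0 : Gm C F x = 0)
    {z : E3} (hz : z ∈ Metric.closedBall x r) : Gm C F z = 0 := by
  set v : E3 := z - x with hv
  have hxK : x ∈ Metric.closedBall x r := Metric.mem_closedBall_self hr
  have hyt : ∀ t ∈ Set.Icc (0:ℝ) 1, x + t • v ∈ Metric.closedBall x r := by
    intro t ht
    rw [Metric.mem_closedBall, dist_eq_norm, add_sub_cancel_left, norm_smul]
    have h1 : ‖v‖ ≤ r := by
      rw [hv, ← dist_eq_norm]; exact hz
    have h2 : ‖t‖ ≤ 1 := by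
      rw [Real.norm_eq_abs, abs_le]; exact ⟨le_trans (by norm_num) ht.1, ht.2⟩
    calc ‖t‖ * ‖v‖ ≤ 1 * r := mul_le_mul h2 h1 (norm_nonneg _) zero_le_one
      _ = r := one_mul r
  -- bound on christoffel symbols on the compact ball
  obtain ⟨M, hM⟩ := (isCompact_closedBall x r).exists_bound_of_continuousOn
    (f := fun y => (fun p : Fin 3 × Fin 3 × Fin 3 => christoffel C p.1 p.2.1 p.2.2 y))
    (continuousOn_pi.2 fun p => (christoffel_contOn hΩ hCreg hpos p.1 p.2.1 p.2.2).mono hball)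
  have hM' : ∀ y ∈ Metric.closedBall x r, ∀ ρ α β, |christoffel C ρ α β y| ≤ M := by
    intro y hy ρ α β
    have := (norm_le_pi_norm (fun p : Fin 3 × Fin 3 × Fin 3 =>
      christoffel C p.1 p.2.1 p.2.2 y) (ρ, α, β)).trans (hM y hy)
    simpa [Real.norm_eq_abs] using this
  have hM0 : (0:ℝ) ≤ M := le_trans (abs_nonneg _) (hM' x hxK 0 0 0)
  set K : ℝ := 18 * M * ‖v‖ with hK
  have hK0 : 0 ≤ K := by positivity
  set g : ℝ → (Fin 3 × Fin 3 → ℝ) := fun t p => Gm C F (x + t • v) p.1 p.2 with hg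
  set g' : ℝ → (Fin 3 × Fin 3 → ℝ) := fun t p => ∑ β, v β *
    (∑ ρ, christoffel C ρ p.1 β (x + t • v) * Gm C F (x + t • v) ρ p.2
      + ∑ ρ, christoffel C ρ p.2 β (x + t • v) * Gm C F (x + t • v) p.1 ρ) with hg'
  have hline : ∀ t : ℝ, HasDerivAt (fun s : ℝ => x + s • v) v t := by
    intro t
    simpa using ((hasDerivAt_id t).smul_const v).const_add x
  have hd : ∀ t ∈ Set.Icc (0:ℝ) 1, HasDerivAt g (g' t) t := by
    intro t ht
    apply hasDerivAt_pi.2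
    intro p
    have hy : x + t • v ∈ Ω := hball (hyt t ht)
    have hfd : HasFDerivAt (fun w => Gm C F w p.1 p.2)
        (fderiv ℝ (fun w => Gm C F w p.1 p.2) (x + t • v)) (x + t • v) :=
      (diffG hΩ hCreg hFreg hy p.1 p.2).hasFDerivAt
    have hcomp := hfd.comp_hasDerivAt t (hline t)
    have hval : fderiv ℝ (fun w => Gm C F w p.1 p.2) (x + t • v) v = g' t p := by
      set L := fderiv ℝ (fun w => Gm C F w p.1 p.2) (x + t • v) with hL
      have hvsum : v = ∑ β, v β • (Pi.single β (1:ℝ) : E3) := by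
        have hs : ∀ β, v β • (Pi.single β (1:ℝ) : E3) = Pi.single β (v β) := fun β => by
          rw [← Pi.single_smul, smul_eq_mul, mul_one]
        simp_rw [hs]
        exact (Finset.univ_sum_single v).symm
      calc L v = ∑ β, v β * L (Pi.single β 1) := by
            conv_lhs => rw [hvsum]
            rw [map_sum]
            exact Finset.sum_congr rfl fun β _ => by rw [ContinuousLinearMap.map_smul, smul_eq_mul]
        _ = g' t p := by
            apply Finset.sum_congr rfl
            intro β _
            congr 1
            exact pd_Gm hΩ hCreg hpos hsym hFreg hF hy p.1 p.2 β
    rw [← hval]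
    exact hcomp
  have hcont : ContinuousOn g (Set.Icc 0 1) :=
    fun t ht => ((hd t ht).continuousAt).continuousWithinAt
  have g0 : ‖g 0‖ ≤ 0 := by
    have : g 0 = 0 := by
      funext p
      simp [hg, h0]
    simp [this]
  have hbound : ∀ t ∈ Set.Ico (0:ℝ) 1, ‖g' t‖ ≤ K * ‖g t‖ + 0 := by
    intro t ht
    rw [add_zero]
    have htI : t ∈ Set.Icc (0:ℝ) 1 := Set.Ico_subset_Icc_self ht
    have hyK := hyt t htI
    have hGb : ∀ a b, |Gm C F (x + t • v) a b| ≤ ‖g t‖ := by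
      intro a b
      have := norm_le_pi_norm (g t) (a, b)
      simpa [hg, Real.norm_eq_abs] using this
    have hgt0 : (0:ℝ) ≤ ‖g t‖ := norm_nonneg _
    apply (pi_norm_le_iff_of_nonneg (by positivity)).2
    intro p
    rw [Real.norm_eq_abs]
    have hterm : ∀ β : Fin 3,
        |v β * (∑ ρ, christoffel C ρ p.1 β (x + t • v) * Gm C F (x + t • v) ρ p.2
          + ∑ ρ, christoffel C ρ p.2 β (x + t • v) * Gm C F (x + t • v) p.1 ρ)|
          ≤ ‖v‖ * (6 * M * ‖g t‖) := by
      intro β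
      rw [abs_mul]
      have hvb : |v β| ≤ ‖v‖ := by
        simpa [Real.norm_eq_abs] using norm_le_pi_norm v β
      have hA : |∑ ρ, christoffel C ρ p.1 β (x + t • v) * Gm C F (x + t • v) ρ p.2|
          ≤ 3 * M * ‖g t‖ := by
        calc |∑ ρ, christoffel C ρ p.1 β (x + t • v) * Gm C F (x + t • v) ρ p.2|
            ≤ ∑ ρ, |christoffel C ρ p.1 β (x + t • v) * Gm C F (x + t • v) ρ p.2| :=
              Finset.abs_sum_le_sum_abs _ _
          _ ≤ ∑ _ρ : Fin 3, M * ‖g t‖ := by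
              apply Finset.sum_le_sum
              intro ρ _
              rw [abs_mul]
              exact mul_le_mul (hM' _ hyK ρ p.1 β) (hGb ρ p.2) (abs_nonneg _) hM0
          _ = 3 * M * ‖g t‖ := by simp [Finset.sum_const]; ring
      have hB : |∑ ρ, christoffel C ρ p.2 β (x + t • v) * Gm C F (x + t • v) p.1 ρ|
          ≤ 3 * M * ‖g t‖ := by
        calc |∑ ρ, christoffel C ρ p.2 β (x + t • v) * Gm C F (x + t • v) p.1 ρ|
            ≤ ∑ ρ, |christoffel C ρ p.2 β (x + t • v) * Gm C F (x + t • v) p.1 ρ| :=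
              Finset.abs_sum_le_sum_abs _ _
          _ ≤ ∑ _ρ : Fin 3, M * ‖g t‖ := by
              apply Finset.sum_le_sum
              intro ρ _
              rw [abs_mul]
              exact mul_le_mul (hM' _ hyK ρ p.2 β) (hGb p.1 ρ) (abs_nonneg _) hM0
          _ = 3 * M * ‖g t‖ := by simp [Finset.sum_const]; ring
      calc |v β| * |∑ ρ, christoffel C ρ p.1 β (x + t • v) * Gm C F (x + t • v) ρ p.2
            + ∑ ρ, christoffel C ρ p.2 β (x + t • v) * Gm C F (x + t • v) p.1 ρ|
          ≤ ‖v‖ * (3 * M * ‖g t‖ + 3 * M * ‖g t‖) := by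
            apply mul_le_mul hvb ((abs_add_le _ _).trans (add_le_add hA hB)) (abs_nonneg _)
              (norm_nonneg _)
        _ = ‖v‖ * (6 * M * ‖g t‖) := by ring
    calc |g' t p| ≤ ∑ β, |v β *
          (∑ ρ, christoffel C ρ p.1 β (x + t • v) * Gm C F (x + t • v) ρ p.2
            + ∑ ρ, christoffel C ρ p.2 β (x + t • v) * Gm C F (x + t • v) p.1 ρ)| :=
          Finset.abs_sum_le_sum_abs _ _
      _ ≤ ∑ _β : Fin 3, ‖v‖ * (6 * M * ‖g t‖) := Finset.sum_le_sum fun β _ => hterm β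
      _ = K * ‖g t‖ := by simp [hK, Finset.sum_const]; ring
  have hgron := norm_le_gronwallBound_of_norm_deriv_right_le hcont
    (fun t ht => (hd t (Set.Ico_subset_Icc_self ht)).hasDerivWithinAt) g0 hbound
  have h1 : ‖g 1‖ ≤ 0 := by
    have := hgron 1 (Set.right_mem_Icc.2 zero_le_one)
    simpa [gronwallBound_ε0] using this
  have hg1 : g 1 = 0 := norm_le_zero_iff.1 h1
  ext a b
  have := congrFun hg1 (a, b)
  simpa [hg, hv] using this


end WeingartenAux

/-- If a C¹ matrix field `F` solves the Pfaffian system of a C² positive-definite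
symmetric field `C` on a connected open `Ω ⊆ ℝ³`, and `F(x₀)ᵀ F(x₀) = C(x₀)` at a single
point `x₀ ∈ Ω`, then `F(x)ᵀ F(x) = C(x)` throughout `Ω`. -/
theorem weingarten_stmt9 (Ω : Set E3) (hΩ : IsOpen Ω) (hconn : IsConnected Ω)
    (C : E3 → Matrix (Fin 3) (Fin 3) ℝ)
    (hCreg : ∀ a b, ContDiffOn ℝ 2 (fun x => C x a b) Ω)
    (hpos : ∀ x ∈ Ω, (C x).PosDef)
    (hsym : ∀ x ∈ Ω, (C x).IsSymm)
    (F : E3 → Matrix (Fin 3) (Fin 3) ℝ)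
    (hFreg : ∀ i a, ContDiffOn ℝ 1 (fun x => F x i a) Ω)
    (hF : SolvesPfaffian C F Ω)
    (x₀ : E3) (hx₀ : x₀ ∈ Ω) (hinit : (F x₀)ᵀ * F x₀ = C x₀) :
    ∀ x ∈ Ω, (F x)ᵀ * F x = C x := by
  have hG0 : Gm C F x₀ = 0 := by rw [Gm, hinit, sub_self]
  classical
  set u : Set E3 := {y | ∃ ε > 0, Metric.closedBall y ε ⊆ Ω ∧
    ∀ z ∈ Metric.closedBall y ε, Gm C F z = 0} with hu
  set w : Set E3 := {y | y ∈ Ω ∧ Gm C F y ≠ 0} with hw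
  have huo : IsOpen u := by
    rw [Metric.isOpen_iff]
    rintro y ⟨ε, hε, hballΩ, hzero⟩
    refine ⟨ε, hε, fun z hz => ?_⟩
    have hd : dist z y < ε := hz
    refine ⟨ε - dist z y, by linarith, ?_, ?_⟩
    · exact (Metric.closedBall_subset_closedBall' (by linarith)).trans hballΩ
    · exact fun z' hz' => hzero z' (Metric.closedBall_subset_closedBall' (by linarith) hz')
  have hwo : IsOpen w := by
    rw [isOpen_iff_mem_nhds]
    rintro y ⟨hyΩ, hne⟩
    have : ∃ a b, Gm C F y a b ≠ 0 := by
      by_contra h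
      push_neg at h
      exact hne (by ext a b; simpa using h a b)
    obtain ⟨a, b, hab⟩ := this
    have hc : ContinuousAt (fun z => Gm C F z a b) y :=
      (Gm_contOn hCreg hFreg a b).continuousAt (hΩ.mem_nhds hyΩ)
    have h1 : ∀ᶠ z in nhds y, Gm C F z a b ≠ 0 := hc.eventually_ne hab
    have h2 : ∀ᶠ z in nhds y, z ∈ Ω := hΩ.eventually_mem hyΩ
    filter_upwards [h1, h2] with z hz1 hz2
    exact ⟨hz2, fun h => hz1 (by rw [h]; simp)⟩
  have hcover : Ω ⊆ u ∪ w := by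
    intro y hy
    by_cases h : Gm C F y = 0
    · left
      obtain ⟨δ, hδ, hb⟩ := Metric.isOpen_iff.1 hΩ y hy
      refine ⟨δ/2, by linarith, (Metric.closedBall_subset_ball (by linarith)).trans hb, ?_⟩
      intro z hz
      exact zero_on_closedBall hΩ hCreg hpos hsym hFreg hF
        ((Metric.closedBall_subset_ball (by linarith)).trans hb) (by linarith) h hz
    · exact Or.inr ⟨hy, h⟩
  have key : ∀ x ∈ Ω, Gm C F x = 0 := by
    by_contra h
    push_neg at h
    obtain ⟨x₁, hx₁, hne₁⟩ := h
    have hx₀u : x₀ ∈ u := by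
      rcases hcover hx₀ with h | h
      · exact h
      · exact absurd hG0 h.2
    obtain ⟨y, hyΩ, hyu, hyw⟩ := hconn.isPreconnected u w huo hwo hcover
      ⟨x₀, hx₀, hx₀u⟩ ⟨x₁, hx₁, hx₁, hne₁⟩
    obtain ⟨ε, hε, _, hzero⟩ := hyu
    exact hyw.2 (hzero y (Metric.mem_closedBall_self (le_of_lt hε)))
  intro x hx
  have := key x hx
  rw [Gm] at this
  exact sub_eq_zero.1 this
end
end

section
/- Let Ω ⊆ ℝ³ be a connected open set, let C be a twice continuously differentiable positive-definite symmetric 3×3 matrix field on Ω with Christoffel symbols Γ, and for each x let U(x) be the unique symmetric positive-definite square root of C(x). Let F₁, F₂ : Ω → ℝ^{3×3} be continuously differentiable solutions of the Pfaffian system F_{iα,β} = Σ_ρ Γ^ρ_{αβ} F_{iρ} satisfying F₁(x)ᵀ F₁(x) = F₂(x)ᵀ F₂(x) = C(x) for all x ∈ Ω, and set R_a(x) := F_a(x) U(x)⁻¹ for a = 1,2 (so each R_a(x) is orthogonal). Then for every C¹ loop γ in Ω and every x ∈ Ω: R₁(x)ᵀ ∫₀¹ F₁(γ(t)) γ'(t)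 dt = R₂(x)ᵀ ∫₀¹ F₂(γ(t)) γ'(t) dt; in particular the Euclidean norms of the two loop integrals (Burgers vectors) are equal. Furthermore, if F₁(x*) = F₂(x*) at some x* ∈ Ω, then ∫₀¹ F₁(γ(t)) γ'(t) dt = ∫₀¹ F₂(γ(t)) γ'(t) dt for every C¹ loop γ in Ω. -/
noncomputable section

open Matrix

/-- constancy of a real function with zero derivative on an open connected set -/
lemma aux_const {f : E3 → ℝ} {Ω : Set E3} (hΩ : IsOpen Ω) (hconn : IsPreconnected Ω)
    (hdiff : ∀ x ∈ Ω, DifferentiableAt ℝ f x) (hz : ∀ x ∈ Ω, fderiv ℝ f x = 0)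
    {x y : E3} (hx : x ∈ Ω) (hy : y ∈ Ω) : f x = f y := by
  have loc : ∀ z ∈ Ω, ∀ᶠ w in nhds z, f w = f z := by
    intro z hz'
    obtain ⟨ε, hε, hball⟩ := Metric.isOpen_iff.1 hΩ z hz'
    filter_upwards [Metric.ball_mem_nhds z hε] with w hw
    refine (convex_ball z ε).is_const_of_fderivWithin_eq_zero
      (fun u hu => (hdiff u (hball hu)).differentiableWithinAt) ?_ hw (Metric.mem_ball_self hε)
    intro u hu
    rw [fderivWithin_of_isOpen Metric.isOpen_ball hu]
    exact hz u (hball hu)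
  set u : Set E3 := {w | w ∈ Ω ∧ f w = f x} with hu_def
  set v : Set E3 := {w | w ∈ Ω ∧ f w ≠ f x} with hv_def
  have hou : IsOpen u := by
    rw [isOpen_iff_mem_nhds]
    rintro w ⟨hwΩ, hwf⟩
    filter_upwards [loc w hwΩ, hΩ.mem_nhds hwΩ] with z hzf hzΩ
    exact ⟨hzΩ, hzf.trans hwf⟩
  have hov : IsOpen v := by
    rw [isOpen_iff_mem_nhds]
    rintro w ⟨hwΩ, hwf⟩
    filter_upwards [loc w hwΩ, hΩ.mem_nhds hwΩ] with z hzf hzΩ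
    exact ⟨hzΩ, hzf ▸ hwf⟩
  have hsub : Ω ⊆ u := by
    refine hconn.subset_left_of_subset_union hou hov ?_ ?_ ⟨x, hx, hx, rfl⟩
    · rw [Set.disjoint_iff]
      rintro w ⟨⟨_, h1⟩, ⟨_, h2⟩⟩
      exact h2 h1
    · intro w hw
      by_cases h : f w = f x
      · exact Or.inl ⟨hw, h⟩
      · exact Or.inr ⟨hw, h⟩
  exact ((hsub hy).2).symm ▸ (hsub hx).2.symm ▸ rfl

lemma pd_finsum_mul {g h : Fin 3 → E3 → ℝ} {x : E3}
    (hg : ∀ α, DifferentiableAt ℝ (g α) x) (hh : ∀ α, DifferentiableAt ℝ (h α) x) (β : Fin 3) :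
    pd β (fun y => ∑ α, g α y * h α y) x
      = ∑ α, (pd β (g α) x * h α x + g α x * pd β (h α) x) := by
  unfold pd
  rw [fderiv_fun_sum (u := Finset.univ) (A := fun α y => g α y * h α y)
    (fun α _ => (hg α).mul (hh α))]
  rw [ContinuousLinearMap.sum_apply]
  refine Finset.sum_congr rfl fun α _ => ?_
  rw [fderiv_fun_mul (hg α) (hh α)]
  simp only [ContinuousLinearMap.add_apply, ContinuousLinearMap.smul_apply, smul_eq_mul]
  ring

lemma pd_congr_nhds {f g : E3 → ℝ} {x : E3} (β : Fin 3) (h : f =ᶠ[nhds x] g) :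
    pd β f x = pd β g x := by
  unfold pd; rw [h.fderiv_eq]

lemma fderiv_eq_zero_of_pd {f : E3 → ℝ} {x : E3}
    (h : ∀ β, pd β f x = 0) : fderiv ℝ f x = 0 := by
  ext v
  have hv : v = ∑ β, v β • (Pi.single β 1 : E3) := by
    funext j
    simp [Pi.single_apply]
  rw [ContinuousLinearMap.zero_apply]
  conv_lhs => rw [hv]
  rw [map_sum]
  simp only [_root_.map_smul, smul_eq_mul]
  have : ∀ β : Fin 3, fderiv ℝ f x (Pi.single β 1) = 0 := h
  simp [this]

lemma sum_col_mul (M : Matrix (Fin 3) (Fin 3) ℝ) (w : Fin 3 → ℝ) (i : Fin 3) :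
    ∑ j, M j i * w j = (Mᵀ *ᵥ w) i := by
  simp [Matrix.mulVec, dotProduct, Matrix.transpose_apply]

/-- Relation between Burgers vectors of two deformations compatible with the same `C`:
with `U` the symmetric positive-definite square root of `C` and rotations
`R_a = F_a U⁻¹`, for every C¹ loop `γ` in `Ω` and `x ∈ Ω` one has
`R₁(x)ᵀ ∫₀¹ F₁(γ(t)) γ'(t) dt = R₂(x)ᵀ ∫₀¹ F₂(γ(t)) γ'(t) dt`; in particular the
Euclidean norms of the loop integrals agree; and if `F₁ = F₂` at one point of `Ω`,
the loop integrals themselves agree. -/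
theorem weingarten_stmt12 (Ω : Set E3) (hΩ : IsOpen Ω) (hconn : IsConnected Ω)
    (C U F₁ F₂ : E3 → Matrix (Fin 3) (Fin 3) ℝ)
    (hCreg : ∀ a b, ContDiffOn ℝ 2 (fun x => C x a b) Ω)
    (hpos : ∀ x ∈ Ω, (C x).PosDef)
    (hsym : ∀ x ∈ Ω, (C x).IsSymm)
    (hU : ∀ x ∈ Ω, (U x).PosDef ∧ (U x).IsSymm ∧ U x * U x = C x)
    (hF₁reg : ∀ i a, ContDiffOn ℝ 1 (fun x => F₁ x i a) Ω)
    (hF₂reg : ∀ i a, ContDiffOn ℝ 1 (fun x => F₂ x i a) Ω)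
    (hF₁ : SolvesPfaffian C F₁ Ω) (hF₂ : SolvesPfaffian C F₂ Ω)
    (hC₁ : ∀ x ∈ Ω, (F₁ x)ᵀ * F₁ x = C x)
    (hC₂ : ∀ x ∈ Ω, (F₂ x)ᵀ * F₂ x = C x) :
    (∀ γ : ℝ → E3, IsC1LoopIn γ Ω → ∀ x ∈ Ω, ∀ i : Fin 3,
      (∑ j, (F₁ x * (U x)⁻¹) j i *
        ∫ t in (0:ℝ)..1, ∑ k, F₁ (γ t) j k * deriv γ t k) =
      (∑ j, (F₂ x * (U x)⁻¹) j i *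
        ∫ t in (0:ℝ)..1, ∑ k, F₂ (γ t) j k * deriv γ t k)) ∧
    (∀ γ : ℝ → E3, IsC1LoopIn γ Ω →
      Real.sqrt (∑ i, (∫ t in (0:ℝ)..1, ∑ k, F₁ (γ t) i k * deriv γ t k) ^ 2) =
      Real.sqrt (∑ i, (∫ t in (0:ℝ)..1, ∑ k, F₂ (γ t) i k * deriv γ t k) ^ 2)) ∧
    (∀ xstar ∈ Ω, F₁ xstar = F₂ xstar →
      ∀ γ : ℝ → E3, IsC1LoopIn γ Ω → ∀ i : Fin 3,
        (∫ t in (0:ℝ)..1, ∑ k, F₁ (γ t) i k * deriv γ t k) =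
        (∫ t in (0:ℝ)..1, ∑ k, F₂ (γ t) i k * deriv γ t k)) := by
  classical
  have hdet₁ : ∀ x ∈ Ω, IsUnit (F₁ x).det := by
    intro x hx
    have h := congrArg Matrix.det (hC₁ x hx)
    rw [Matrix.det_mul, Matrix.det_transpose] at h
    have hC0 : (C x).det ≠ 0 := ne_of_gt (hpos x hx).det_pos
    refine isUnit_iff_ne_zero.2 fun h0 => hC0 ?_
    rw [← h, h0, mul_zero]
  set H : E3 → Matrix (Fin 3) (Fin 3) ℝ := fun y => F₂ y * (F₁ y)⁻¹ with hH_def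
  have hHF : ∀ y ∈ Ω, H y * F₁ y = F₂ y := fun y hy =>
    Matrix.nonsing_inv_mul_cancel_right _ _ (hdet₁ y hy)
  have hd₁ : ∀ i a : Fin 3, ∀ x ∈ Ω, DifferentiableAt ℝ (fun y => F₁ y i a) x := fun i a x hx =>
    ((hF₁reg i a).differentiableOn one_ne_zero).differentiableAt (hΩ.mem_nhds hx)
  have hd₂ : ∀ i a : Fin 3, ∀ x ∈ Ω, DifferentiableAt ℝ (fun y => F₂ y i a) x := fun i a x hx =>
    ((hF₂reg i a).differentiableOn one_ne_zero).differentiableAt (hΩ.mem_nhds hx)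
  have hdetd : ∀ x ∈ Ω, DifferentiableAt ℝ (fun y => (F₁ y).det) x := by
    intro x hx
    have h : ∀ i a : Fin 3, DifferentiableAt ℝ (fun y => F₁ y i a) x := fun i a => hd₁ i a x hx
    simp only [Matrix.det_fin_three]
    fun_prop
  have hinvd : ∀ k a : Fin 3, ∀ x ∈ Ω, DifferentiableAt ℝ (fun y => (F₁ y)⁻¹ k a) x := by
    intro k a x hx
    have h : ∀ i a : Fin 3, DifferentiableAt ℝ (fun y => F₁ y i a) x := fun i a => hd₁ i a x hx
    have hrw : (fun y => (F₁ y)⁻¹ k a) = fun y => ((F₁ y).det)⁻¹ * (F₁ y).adjugate k a := by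
      funext y
      rw [Matrix.inv_def, Ring.inverse_eq_inv']
      simp [Matrix.smul_apply, smul_eq_mul]
    rw [hrw]
    refine DifferentiableAt.mul ((hdetd x hx).inv (hdet₁ x hx).ne_zero) ?_
    fin_cases k <;> fin_cases a <;>
      simp only [Matrix.adjugate_fin_three, Matrix.of_apply, Matrix.cons_val',
        Matrix.cons_val_zero, Matrix.cons_val_one, Matrix.head_cons, Matrix.cons_val_two,
        Matrix.tail_cons, Matrix.head_fin_const, Matrix.empty_val', Matrix.cons_val_fin_one,
        Fin.isValue, Fin.zero_eta, Fin.mk_one, Fin.reduceFinMk] <;>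
      fun_prop
  have hHd : ∀ i a : Fin 3, ∀ x ∈ Ω, DifferentiableAt ℝ (fun y => H y i a) x := by
    intro i a x hx
    have hrw : (fun y => H y i a) = fun y => ∑ k, F₂ y i k * (F₁ y)⁻¹ k a := by
      funext y; rw [hH_def]; simp [Matrix.mul_apply]
    rw [hrw]
    exact DifferentiableAt.fun_sum fun k _ => (hd₂ i k x hx).mul (hinvd k a x hx)
  have hHFe : ∀ y ∈ Ω, ∀ i j : Fin 3, F₂ y i j = ∑ α, H y i α * F₁ y α j := by
    intro y hy i j
    conv_lhs => rw [← hHF y hy]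
    simp [Matrix.mul_apply]
  have hpdH : ∀ x ∈ Ω, ∀ β i α : Fin 3, pd β (fun y => H y i α) x = 0 := by
    intro x hx β i
    have key : ∀ j, ∑ α, pd β (fun y => H y i α) x * F₁ x α j = 0 := by
      intro j
      have e1 : pd β (fun y => F₂ y i j) x = pd β (fun y => ∑ α, H y i α * F₁ y α j) x := by
        refine pd_congr_nhds β ?_
        filter_upwards [hΩ.mem_nhds hx] with y hy
        exact hHFe y hy i j
      rw [pd_finsum_mul (fun α => hHd i α x hx) (fun α => hd₁ α j x hx)] at e1
      have e2 := hF₂ x hx i j β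
      have e3 : ∀ α, pd β (fun y => F₁ y α j) x = ∑ ρ, christoffel C ρ j β x * F₁ x α ρ :=
        fun α => hF₁ x hx α j β
      have e4 : (∑ ρ, christoffel C ρ j β x * F₂ x i ρ)
          = ∑ α, H x i α * pd β (fun y => F₁ y α j) x := by
        calc ∑ ρ, christoffel C ρ j β x * F₂ x i ρ
            = ∑ ρ, christoffel C ρ j β x * ∑ α, H x i α * F₁ x α ρ :=
              Finset.sum_congr rfl fun ρ _ => by rw [hHFe x hx i ρ]
          _ = ∑ α, H x i α * ∑ ρ, christoffel C ρ j β x * F₁ x α ρ := by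
              simp_rw [Finset.mul_sum]
              rw [Finset.sum_comm]
              exact Finset.sum_congr rfl fun α _ => Finset.sum_congr rfl fun ρ _ => by ring
          _ = ∑ α, H x i α * pd β (fun y => F₁ y α j) x :=
              Finset.sum_congr rfl fun α _ => by rw [e3 α]
      rw [e2, e4] at e1
      rw [Finset.sum_add_distrib] at e1
      linarith [e1]
    intro α
    have hw : (fun α => pd β (fun y => H y i α) x) ᵥ* F₁ x = 0 := by
      funext j
      simpa [Matrix.vecMul, dotProduct] using key j
    have h2 : (fun α => pd β (fun y => H y i α) x) = 0 := by
      have h3 := congrArg (fun w => w ᵥ* (F₁ x)⁻¹) hw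
      simpa [Matrix.vecMul_vecMul, Matrix.mul_nonsing_inv _ (hdet₁ x hx),
        Matrix.vecMul_one, Matrix.zero_vecMul] using h3
    exact congrFun h2 α
  have hfdH : ∀ x ∈ Ω, ∀ i α : Fin 3, fderiv ℝ (fun y => H y i α) x = 0 :=
    fun x hx i α => fderiv_eq_zero_of_pd (fun β => hpdH x hx β i α)
  obtain ⟨x₀, hx₀⟩ := hconn.nonempty
  have hHconst : ∀ y ∈ Ω, H y = H x₀ := by
    intro y hy
    ext i α
    exact aux_const hΩ hconn.isPreconnected (fun z hz => hHd i α z hz)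
      (fun z hz => hfdH z hz i α) hy hx₀
  set Q : Matrix (Fin 3) (Fin 3) ℝ := H x₀ with hQ_def
  have hQF : ∀ y ∈ Ω, F₂ y = Q * F₁ y := by
    intro y hy
    rw [← hHF y hy, hHconst y hy]
  have hQorth : Qᵀ * Q = 1 := by
    have h1 := hC₁ x₀ hx₀
    have h2 := hC₂ x₀ hx₀
    have hdT : IsUnit ((F₁ x₀)ᵀ).det := by rw [Matrix.det_transpose]; exact hdet₁ x₀ hx₀
    have e : Qᵀ * Q = ((F₁ x₀)⁻¹)ᵀ * (((F₂ x₀)ᵀ * F₂ x₀) * (F₁ x₀)⁻¹) := by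
      rw [hQ_def, hH_def]
      simp only [Matrix.transpose_mul, Matrix.mul_assoc]
    rw [h2, ← h1] at e
    rw [e, Matrix.transpose_nonsing_inv]
    calc ((F₁ x₀)ᵀ)⁻¹ * ((F₁ x₀)ᵀ * F₁ x₀ * (F₁ x₀)⁻¹)
        = ((F₁ x₀)ᵀ)⁻¹ * ((F₁ x₀)ᵀ * (F₁ x₀ * (F₁ x₀)⁻¹)) := by
          simp only [Matrix.mul_assoc]
      _ = 1 := by
          rw [Matrix.mul_nonsing_inv _ (hdet₁ x₀ hx₀), Matrix.mul_one,
            Matrix.nonsing_inv_mul _ hdT]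
  have hInt : ∀ γ : ℝ → E3, IsC1LoopIn γ Ω →
      (∀ j : Fin 3, IntervalIntegrable (fun t => ∑ k, F₁ (γ t) j k * deriv γ t k)
        MeasureTheory.volume (0:ℝ) 1) ∧
      (∀ i : Fin 3, (∫ t in (0:ℝ)..1, ∑ k, F₂ (γ t) i k * deriv γ t k)
        = ∑ j, Q i j * ∫ t in (0:ℝ)..1, ∑ k, F₁ (γ t) j k * deriv γ t k) := by
    rintro γ ⟨hγ1, hγ2, _⟩
    have huIcc : Set.uIcc (0:ℝ) 1 = Set.Icc 0 1 := Set.uIcc_of_le zero_le_one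
    have huIoc : Set.uIoc (0:ℝ) 1 = Set.Ioc 0 1 := Set.uIoc_of_le zero_le_one
    set d : ℝ → E3 := fun t => derivWithin γ (Set.Icc 0 1) t with hd_def
    have hdc : ContinuousOn d (Set.Icc 0 1) :=
      hγ1.continuousOn_derivWithin uniqueDiffOn_Icc_zero_one le_rfl
    have hgc : ∀ j : Fin 3, ContinuousOn (fun t => ∑ k, F₁ (γ t) j k * d t k) (Set.Icc 0 1) := by
      intro j
      refine continuousOn_finset_sum _ fun k _ => ContinuousOn.mul ?_ ?_
      · exact ((hF₁reg j k).continuousOn).comp hγ1.continuousOn hγ2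
      · exact (continuous_apply k).comp_continuousOn hdc
    have hdeq : ∀ t ∈ Set.Ioo (0:ℝ) 1, deriv γ t = d t := fun t ht =>
      (derivWithin_of_mem_nhds (Icc_mem_nhds ht.1 ht.2)).symm
    have hres : MeasureTheory.volume.restrict (Set.uIoc (0:ℝ) 1)
        = MeasureTheory.volume.restrict (Set.Ioo (0:ℝ) 1) := by
      rw [huIoc]
      exact (MeasureTheory.Measure.restrict_congr_set MeasureTheory.Ioo_ae_eq_Ioc).symm
    have hint1 : ∀ j : Fin 3, IntervalIntegrable (fun t => ∑ k, F₁ (γ t) j k * deriv γ t k)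
        MeasureTheory.volume (0:ℝ) 1 := by
      intro j
      refine IntervalIntegrable.congr_ae (f := fun t => ∑ k, F₁ (γ t) j k * d t k) ?_ ?_
      · refine ContinuousOn.intervalIntegrable ?_
        rw [huIcc]; exact hgc j
      · rw [hres]
        filter_upwards [MeasureTheory.ae_restrict_mem measurableSet_Ioo] with t ht
        rw [hdeq t ht]
    refine ⟨hint1, ?_⟩
    intro i
    have heqOn : Set.EqOn (fun t => ∑ k, F₂ (γ t) i k * deriv γ t k)
        (fun t => ∑ j, Q i j * ∑ k, F₁ (γ t) j k * deriv γ t k) (Set.uIcc (0:ℝ) 1) := by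
      intro t ht
      rw [huIcc] at ht
      have h2 := hQF (γ t) (hγ2 t ht)
      show ∑ k, F₂ (γ t) i k * deriv γ t k = ∑ j, Q i j * ∑ k, F₁ (γ t) j k * deriv γ t k
      calc ∑ k, F₂ (γ t) i k * deriv γ t k
          = ∑ k, (∑ j, Q i j * F₁ (γ t) j k) * deriv γ t k :=
            Finset.sum_congr rfl fun k _ => by rw [h2, Matrix.mul_apply]
        _ = ∑ j, Q i j * ∑ k, F₁ (γ t) j k * deriv γ t k := by
            simp_rw [Finset.sum_mul, Finset.mul_sum]
            rw [Finset.sum_comm]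
            exact Finset.sum_congr rfl fun j _ => Finset.sum_congr rfl fun k _ => by ring
    rw [intervalIntegral.integral_congr heqOn]
    rw [intervalIntegral.integral_finset_sum (fun j _ => (hint1 j).const_mul (Q i j))]
    simp_rw [intervalIntegral.integral_const_mul]
  refine ⟨?_, ?_, ?_⟩
  · intro γ hγ x hx i
    obtain ⟨hint1, hrel⟩ := hInt γ hγ
    set v : Fin 3 → ℝ := fun j => ∫ t in (0:ℝ)..1, ∑ k, F₁ (γ t) j k * deriv γ t k with hv_def
    have hv2 : (fun j => ∫ t in (0:ℝ)..1, ∑ k, F₂ (γ t) j k * deriv γ t k) = Q *ᵥ v := by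
      funext j
      rw [hrel j]
      simp [Matrix.mulVec, dotProduct, hv_def]
    have hL : (∑ j, (F₁ x * (U x)⁻¹) j i * v j) = ((F₁ x * (U x)⁻¹)ᵀ *ᵥ v) i :=
      sum_col_mul _ v i
    have hR : (∑ j, (F₂ x * (U x)⁻¹) j i *
          ∫ t in (0:ℝ)..1, ∑ k, F₂ (γ t) j k * deriv γ t k)
        = ((F₂ x * (U x)⁻¹)ᵀ *ᵥ fun j => ∫ t in (0:ℝ)..1, ∑ k, F₂ (γ t) j k * deriv γ t k) i :=
      sum_col_mul _ _ i
    rw [hL, hR, hv2]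
    have hmain : (F₂ x * (U x)⁻¹)ᵀ *ᵥ (Q *ᵥ v) = (F₁ x * (U x)⁻¹)ᵀ *ᵥ v := by
      rw [hQF x hx, Matrix.mul_assoc, Matrix.transpose_mul (Q) (F₁ x * (U x)⁻¹),
        ← Matrix.mulVec_mulVec, Matrix.mulVec_mulVec (M := Qᵀ), hQorth, Matrix.one_mulVec]
    rw [hmain]
  · intro γ hγ
    obtain ⟨hint1, hrel⟩ := hInt γ hγ
    congr 1
    set v : Fin 3 → ℝ := fun j => ∫ t in (0:ℝ)..1, ∑ k, F₁ (γ t) j k * deriv γ t k with hv_def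
    have hv2 : ∀ j, (∫ t in (0:ℝ)..1, ∑ k, F₂ (γ t) j k * deriv γ t k) = (Q *ᵥ v) j := by
      intro j
      rw [hrel j]
      simp [Matrix.mulVec, dotProduct, hv_def]
    calc ∑ i, v i ^ 2 = v ⬝ᵥ v := by simp [dotProduct, sq]
      _ = (Q *ᵥ v) ⬝ᵥ (Q *ᵥ v) := by
          rw [dotProduct_mulVec, ← Matrix.vecMul_transpose (A := Q),
            Matrix.vecMul_vecMul, hQorth, Matrix.vecMul_one]
      _ = ∑ i, (∫ t in (0:ℝ)..1, ∑ k, F₂ (γ t) i k * deriv γ t k) ^ 2 := by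
          simp only [dotProduct, hv2, sq]
  · intro xstar hxs heqF γ hγ i
    obtain ⟨hint1, hrel⟩ := hInt γ hγ
    have hQ1 : Q = 1 := by
      have h := hQF xstar hxs
      rw [← heqF] at h
      have h3 := congrArg (fun M => M * (F₁ xstar)⁻¹) h
      simp only [Matrix.mul_nonsing_inv _ (hdet₁ xstar hxs),
        Matrix.mul_nonsing_inv_cancel_right _ _ (hdet₁ xstar hxs)] at h3
      exact h3.symm
    rw [hrel i, hQ1]
    simp [Matrix.one_apply]
end
end
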